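/- arXiv:2406.10122 — 3 statements merged into one kernel-verified Lean document; each statement's English description precedes it below -/
import Mathlib

section
/- Let Δ = {j_1 < j_2 < ⋯ < j_k < n} ∪ {n} be a subset of {1,…,n} containing n. Then σ^{-1}τ_Δ equals the product, in increasing order of the index m, of the adjacent transpositions s_m = (m, m+1) over all m ∈ {1,…,n−1} with m ∉ Δ; that is, σ^{-1}τ_Δ = s_1 ⋯ ŝ_{j_1} ⋯ ŝ_{j_2} ⋯ ŝ_{j_k} ⋯ s_{n-1}, where ŝ_{j_i} indicates that the factor s_{j_i} is omitted. -/
/-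
Common setup.  The ambient space is `ℂ^(n+1)` (so the paper's `n` is our `n + 1`,
and the paper's hypothesis `n ≥ 2` becomes `1 ≤ n`).  Coordinates are indexed by
`Fin (n+1)`, zero-indexed, so the paper's index `i ∈ {1, …, n}` is our `i - 1`,
and the paper's `e_n` is `e (Fin.last n)`.
-/

noncomputable section

namespace ShareshianPairs

/-- The standard basis vector `e i` of `ℂ^(n+1)`. -/
def e (n : ℕ) (i : Fin (n + 1)) : Fin (n + 1) → ℂ := Pi.single i 1

/-- The hat vector `ê j = e j + e n`. -/
def hatE (n : ℕ) (j : Fin (n + 1)) : Fin (n + 1) → ℂ := e n j + e n (Fin.last n)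

/-- The flag `(v 0 ⊂ v 1 ⊂ ⋯)` spanned by a sequence of vectors. -/
def flagOf (n : ℕ) (v : Fin (n + 1) → Fin (n + 1) → ℂ) :
    Fin (n + 1) → Submodule ℂ (Fin (n + 1) → ℂ) :=
  fun i => Submodule.span ℂ (v '' {j | j ≤ i})

/-- A full flag in `ℂ^(n+1)`. -/
def IsFlag (n : ℕ) (V : Fin (n + 1) → Submodule ℂ (Fin (n + 1) → ℂ)) : Prop :=
  Monotone V ∧ ∀ i : Fin (n + 1), Module.finrank ℂ (V i) = (i : ℕ) + 1

/-- The action of `GL(n+1, ℂ)` on flags. -/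
def actFlag (n : ℕ) (g : Matrix.GeneralLinearGroup (Fin (n + 1)) ℂ)
    (V : Fin (n + 1) → Submodule ℂ (Fin (n + 1) → ℂ)) :
    Fin (n + 1) → Submodule ℂ (Fin (n + 1) → ℂ) :=
  fun i => (V i).map (Matrix.mulVecLin (g : Matrix (Fin (n + 1)) (Fin (n + 1)) ℂ))

/-- Membership in the Borel subgroup `B` of invertible upper triangular matrices. -/
def InB (n : ℕ) (g : Matrix.GeneralLinearGroup (Fin (n + 1)) ℂ) : Prop :=
  ∀ i j : Fin (n + 1), j < i → (g : Matrix (Fin (n + 1)) (Fin (n + 1)) ℂ) i j = 0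

/-- Membership in `B_{n-1} ⊂ B` : upper triangular, last diagonal entry `1`,
remaining last-column entries `0`. -/
def InBsmall (n : ℕ) (g : Matrix.GeneralLinearGroup (Fin (n + 1)) ℂ) : Prop :=
  InB n g ∧
    (g : Matrix (Fin (n + 1)) (Fin (n + 1)) ℂ) (Fin.last n) (Fin.last n) = 1 ∧
    ∀ i : Fin (n + 1), i ≠ Fin.last n →
      (g : Matrix (Fin (n + 1)) (Fin (n + 1)) ℂ) i (Fin.last n) = 0

/-- The spanning vectors of the flag `E* = (e_n ⊂ e_1 ⊂ ⋯ ⊂ e_{n-1})`. -/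
def eStarVec (n : ℕ) : Fin (n + 1) → Fin (n + 1) → ℂ :=
  fun i => Fin.cases (e n (Fin.last n)) (fun j => e n j.castSucc) i

/-- Membership in `B*`, the stabilizer of the flag `E*`. -/
def InBstar (n : ℕ) (g : Matrix.GeneralLinearGroup (Fin (n + 1)) ℂ) : Prop :=
  actFlag n g (flagOf n (eStarVec n)) = flagOf n (eStarVec n)

/-- Membership in `H`, the invertible diagonal matrices. -/
def InH (n : ℕ) (g : Matrix.GeneralLinearGroup (Fin (n + 1)) ℂ) : Prop :=
  ∀ i j : Fin (n + 1), i ≠ j → (g : Matrix (Fin (n + 1)) (Fin (n + 1)) ℂ) i j = 0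

/-- The orbit of a flag under the subgroup `{g | P g}`. -/
def orbit (n : ℕ) (P : Matrix.GeneralLinearGroup (Fin (n + 1)) ℂ → Prop)
    (V : Fin (n + 1) → Submodule ℂ (Fin (n + 1) → ℂ)) :
    Set (Fin (n + 1) → Submodule ℂ (Fin (n + 1) → ℂ)) :=
  {W | ∃ g : Matrix.GeneralLinearGroup (Fin (n + 1)) ℂ, P g ∧ W = actFlag n g V}

/-- A sequence of spanning vectors is in standard form. -/
def IsStdForm (n : ℕ) (v : Fin (n + 1) → Fin (n + 1) → ℂ) : Prop :=
  LinearIndependent ℂ v ∧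
  (∀ i, (∃ j, v i = e n j) ∨ (∃ j, j ≠ Fin.last n ∧ v i = hatE n j)) ∧
  (∃ i, v i = e n (Fin.last n)) ∧
  (∀ i k : Fin (n + 1), v i = e n (Fin.last n) → i < k → ∃ j, v k = e n j) ∧
  (∀ i k ji jk : Fin (n + 1), i < k → ji ≠ Fin.last n → jk ≠ Fin.last n →
    v i = hatE n ji → v k = hatE n jk → jk < ji)

/-- `vs` spans the flag `F*` : each hat vector `ê j` of `v` is replaced by `e j`,
all other entries are unchanged. -/
def StarPair (n : ℕ) (v vs : Fin (n + 1) → Fin (n + 1) → ℂ) : Prop :=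
  ∀ q : Fin (n + 1),
    ((∃ t, v q = e n t) → vs q = v q) ∧
    (∀ j : Fin (n + 1), j ≠ Fin.last n → v q = hatE n j → vs q = e n j)

/-- `vt` spans the flag `F̃` attached to the standard-form flag spanned by `v`. -/
def TildePair (n : ℕ) (v vt : Fin (n + 1) → Fin (n + 1) → ℂ) : Prop :=
  ((∀ q, ∃ t, v q = e n t) ∧ vt = v) ∨
  (∃ (k : ℕ) (hk : 0 < k) (i j : Fin k → Fin (n + 1)) (p : Fin (n + 1)),
    StrictAnti i ∧ StrictMono j ∧
    (∀ m : Fin k, j m ≠ Fin.last n ∧ v (i m) = hatE n (j m)) ∧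
    v p = e n (Fin.last n) ∧
    (∀ q : Fin (n + 1), (∀ m : Fin k, q ≠ i m) → ∃ t, v q = e n t) ∧
    vt (i ⟨k - 1, Nat.sub_lt hk Nat.one_pos⟩) = e n (Fin.last n) ∧
    (∀ (m : Fin k) (h : (m : ℕ) + 1 < k), vt (i m) = e n (j ⟨(m : ℕ) + 1, h⟩)) ∧
    vt p = e n (j ⟨0, hk⟩) ∧
    (∀ q : Fin (n + 1), (∀ m : Fin k, q ≠ i m) → q ≠ p → vt q = v q))

/-- The `(n+1)`-cycle `σ`, zero-indexed version of the paper's `σ = (n, n-1, …, 1)`: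
`σ 0 = n` and `σ k = k - 1` for `k ≥ 1`. -/
def sigma (n : ℕ) : Equiv.Perm (Fin (n + 1)) := (finRotate (n + 1))⁻¹

/-- The cycle `τ_Δ = (n, j_k, …, j_2, j_1)` attached to a subset
`Δ = {j_1 < ⋯ < j_k < n} ∪ {n}`:  it sends each element of `Δ` to the next
smaller element (the smallest going back to the largest) and fixes everything else. -/
def tauDelta (n : ℕ) (Δ : Finset (Fin (n + 1))) : Equiv.Perm (Fin (n + 1)) :=
  ((Δ.sort (· ≤ ·)).formPerm)⁻¹

/-- `Δ` is a decreasing sequence for `w⁻¹`. -/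
def IsDecreasingFor (n : ℕ) (Δ : Finset (Fin (n + 1)))
    (w : Equiv.Perm (Fin (n + 1))) : Prop :=
  ∀ x ∈ Δ, ∀ y ∈ Δ, x < y → w⁻¹ y < w⁻¹ x

/-- The spanning vectors of the flag `y(E*)`. -/
def eStarPermVec (n : ℕ) (y : Equiv.Perm (Fin (n + 1))) :
    Fin (n + 1) → Fin (n + 1) → ℂ :=
  fun i => Fin.cases (e n (y (Fin.last n))) (fun t => e n (y t.castSucc)) i

/-- Coxeter length = number of inversions. -/
def len (n : ℕ) (w : Equiv.Perm (Fin (n + 1))) : ℕ :=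
  (Finset.univ.filter
    (fun p : Fin (n + 1) × Fin (n + 1) => p.1 < p.2 ∧ w p.2 < w p.1)).card

/-- Length with respect to the set of simple reflections `S*`. -/
def lenStar (n : ℕ) (x : Equiv.Perm (Fin (n + 1))) : ℕ :=
  len n ((sigma n)⁻¹ * x * sigma n)

/-- Bruhat order on the symmetric group (tableau criterion):
`y ≤ w` iff `#{i ≤ p : y i ≤ q} ≥ #{i ≤ p : w i ≤ q}` for all `p, q`. -/
def bruhatLE (n : ℕ) (y w : Equiv.Perm (Fin (n + 1))) : Prop :=
  ∀ p q : Fin (n + 1),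
    (Finset.univ.filter (fun i => i ≤ p ∧ w i ≤ q)).card ≤
      (Finset.univ.filter (fun i => i ≤ p ∧ y i ≤ q)).card

/-- The total order `n ≺ 1 ≺ 2 ≺ ⋯ ≺ n - 1` (zero-indexed). -/
def precOrd (n : ℕ) (a b : Fin (n + 1)) : Prop :=
  finRotate (n + 1) a < finRotate (n + 1) b

/-- `(w, u*)` is a Shareshian pair. -/
def IsShPair (n : ℕ) (w u : Equiv.Perm (Fin (n + 1))) : Prop :=
  ∃ Δ : Finset (Fin (n + 1)), Fin.last n ∈ Δ ∧ IsDecreasingFor n Δ w ∧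
    u = tauDelta n Δ * w * (sigma n)⁻¹

/-- The matrix whose `i`-th column is `v i`. -/
def colMat (n : ℕ) (v : Fin (n + 1) → Fin (n + 1) → ℂ) :
    Matrix (Fin (n + 1)) (Fin (n + 1)) ℂ :=
  Matrix.of fun r c => v c r

/-- The double coset `{b₁ * g * b₂ | P b₁, Q b₂}` as a set of matrices. -/
def dblCoset (n : ℕ) (P Q : Matrix.GeneralLinearGroup (Fin (n + 1)) ℂ → Prop)
    (g : Matrix (Fin (n + 1)) (Fin (n + 1)) ℂ) :
    Set (Matrix (Fin (n + 1)) (Fin (n + 1)) ℂ) :=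
  {x | ∃ b₁ b₂ : Matrix.GeneralLinearGroup (Fin (n + 1)) ℂ, P b₁ ∧ Q b₂ ∧
    x = (b₁ : Matrix (Fin (n + 1)) (Fin (n + 1)) ℂ) * g *
      (b₂ : Matrix (Fin (n + 1)) (Fin (n + 1)) ℂ)}

/-- The coordinate subspace `E_q = span {e_1, …, e_q}`. -/
def Esub (n : ℕ) (q : ℕ) : Submodule ℂ (Fin (n + 1) → ℂ) :=
  Submodule.span ℂ (e n '' {t : Fin (n + 1) | (t : ℕ) < q})

/-- The line `L = ℂ e_n`. -/
def Lline (n : ℕ) : Submodule ℂ (Fin (n + 1) → ℂ) :=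
  Submodule.span ℂ {e n (Fin.last n)}

open Fin.NatCast

/-- auxiliary: the adjacent transposition indexed by a natural number. -/
def auxS (n : ℕ) (m : ℕ) : Equiv.Perm (Fin (n + 1)) :=
  Equiv.swap (m : Fin (n + 1)) ((m : Fin (n + 1)) + 1)

/-- auxiliary: product of adjacent transpositions over a list of naturals. -/
def auxPr (n : ℕ) (l : List ℕ) : Equiv.Perm (Fin (n + 1)) := (l.map (auxS n)).prod

lemma auxS_eq (n m : ℕ) :
    auxS n m = Equiv.swap (m : Fin (n + 1)) ((m + 1 : ℕ) : Fin (n + 1)) := by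
  rw [auxS, Nat.cast_add_one]

lemma aux_cast_inj {n x y : ℕ} (hx : x ≤ n) (hy : y ≤ n) :
    (x : Fin (n + 1)) = (y : Fin (n + 1)) ↔ x = y := by
  constructor
  · intro h
    have h2 := congrArg Fin.val h
    rwa [Fin.val_cast_of_lt (Nat.lt_succ_of_le hx),
      Fin.val_cast_of_lt (Nat.lt_succ_of_le hy)] at h2
  · rintro rfl; rfl

lemma aux_cast_ne {n x y : ℕ} (hx : x ≤ n) (hy : y ≤ n) (h : x ≠ y) :
    (x : Fin (n + 1)) ≠ (y : Fin (n + 1)) :=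
  fun hc => h ((aux_cast_inj hx hy).mp hc)

lemma aux_mem_range' {m s k : ℕ} : m ∈ List.range' s k ↔ s ≤ m ∧ m < s + k := by
  rw [List.mem_range']
  constructor
  · rintro ⟨i, hi, rfl⟩; omega
  · intro h; exact ⟨m - s, by omega, by omega⟩

lemma auxPr_nil (n : ℕ) : auxPr n [] = 1 := rfl

lemma auxPr_cons (n : ℕ) (a : ℕ) (l : List ℕ) :
    auxPr n (a :: l) = auxS n a * auxPr n l := by
  simp [auxPr]

lemma auxPr_append (n : ℕ) (l₁ l₂ : List ℕ) :
    auxPr n (l₁ ++ l₂) = auxPr n l₁ * auxPr n l₂ := by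
  simp [auxPr]

lemma auxPr_fix (n : ℕ) (l : List ℕ) (y : Fin (n + 1))
    (h : ∀ m ∈ l, (m : Fin (n + 1)) ≠ y ∧ ((m + 1 : ℕ) : Fin (n + 1)) ≠ y) :
    auxPr n l y = y := by
  induction l with
  | nil => rfl
  | cons a l ih =>
    rw [auxPr_cons, Equiv.Perm.mul_apply, ih (fun m hm => h m (List.mem_cons_of_mem _ hm)),
      auxS_eq]
    exact Equiv.swap_apply_of_ne_of_ne (Ne.symm (h a List.mem_cons_self).1)
      (Ne.symm (h a List.mem_cons_self).2)

lemma auxPr_run_top (n : ℕ) : ∀ (k a : ℕ), a + k ≤ n →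
    auxPr n (List.range' a k) ((a + k : ℕ) : Fin (n + 1)) = (a : Fin (n + 1))
  | 0, a, _ => rfl
  | (k + 1), a, h => by
    rw [List.range'_succ, auxPr_cons, Equiv.Perm.mul_apply,
      show a + (k + 1) = (a + 1) + k from by omega,
      auxPr_run_top n k (a + 1) (by omega), auxS_eq]
    exact Equiv.swap_apply_right _ _

lemma auxPr_run_mem (n : ℕ) : ∀ (k a x : ℕ), a ≤ x → x < a + k → a + k ≤ n →
    auxPr n (List.range' a k) (x : Fin (n + 1)) = ((x + 1 : ℕ) : Fin (n + 1))
  | 0, a, x, h1, h2, _ => absurd h2 (by omega)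
  | (k + 1), a, x, h1, h2, h3 => by
    rw [List.range'_succ, auxPr_cons, Equiv.Perm.mul_apply]
    rcases Nat.eq_or_lt_of_le h1 with rfl | hlt
    · rw [auxPr_fix n _ _ ?_, auxS_eq, Equiv.swap_apply_left]
      intro m hm
      have hm' := aux_mem_range'.mp hm
      refine ⟨aux_cast_ne (by omega) (by omega) (by omega),
        aux_cast_ne (by omega) (by omega) (by omega)⟩
    · rw [auxPr_run_mem n k (a + 1) x hlt (by omega) (by omega), auxS_eq]
      exact Equiv.swap_apply_of_ne_of_ne (aux_cast_ne (by omega) (by omega) (by omega))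
        (aux_cast_ne (by omega) (by omega) (by omega))


lemma aux_key (n : ℕ) : ∀ (Δ : Finset (Fin (n + 1))), Fin.last n ∈ Δ →
    (sigma n)⁻¹ * tauDelta n Δ =
      auxPr n ((List.range n).filter (fun m : ℕ => decide ((m : Fin (n + 1)) ∉ Δ))) := by
  intro Δ
  induction Δ using Finset.strongInduction with
  | _ Δ IH =>
    intro hΔ
    by_cases hsing : Δ = {Fin.last n}
    · subst hsing
      have hτ : tauDelta n ({Fin.last n} : Finset (Fin (n + 1))) = 1 := by
        rw [tauDelta, Finset.sort_singleton, List.formPerm_singleton, inv_one]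
      have hfilter : (List.range n).filter
          (fun m : ℕ => decide ((m : Fin (n + 1)) ∉ ({Fin.last n} : Finset (Fin (n + 1)))))
          = List.range n := by
        rw [List.filter_eq_self]
        intro m hm
        have hm' := List.mem_range.mp hm
        simp only [Finset.mem_singleton, decide_eq_true_eq]
        intro h
        have h2 := congrArg Fin.val h
        rw [Fin.val_cast_of_lt (by omega), Fin.val_last] at h2
        omega
      rw [hτ, mul_one, sigma, inv_inv, hfilter]
      refine Equiv.ext fun x => ?_
      rcases Nat.lt_or_ge x.val n with hx | hx
      · have h2 : auxPr n (List.range n) x = ((x.val + 1 : ℕ) : Fin (n + 1)) := by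
          conv_lhs => rw [List.range_eq_range', ← Fin.cast_val_eq_self x]
          exact auxPr_run_mem n n 0 x.val (Nat.zero_le _) (by omega) (by omega)
        rw [h2, finRotate_succ_apply, Nat.cast_add_one, Fin.cast_val_eq_self]
      · have hxl : x = Fin.last n := Fin.ext (by
          have := x.isLt; simp only [Fin.val_last]; omega)
        subst hxl
        have h2 : auxPr n (List.range n) (Fin.last n) = ((0 : ℕ) : Fin (n + 1)) := by
          have h3 := auxPr_run_top n n 0 (by omega)
          rw [show ((0 + n : ℕ) : Fin (n + 1)) = Fin.last n from by
            rw [Nat.zero_add]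
            exact Fin.ext (by rw [Fin.val_cast_of_lt (by omega), Fin.val_last])] at h3
          rw [List.range_eq_range', h3]
        rw [h2, finRotate_last, Nat.cast_zero]
    · -- inductive step
      have hne : Δ.Nonempty := ⟨_, hΔ⟩
      set j := Δ.min' hne with hj
      have hjΔ : j ∈ Δ := Δ.min'_mem hne
      have hjne : j ≠ Fin.last n := by
        intro h
        apply hsing
        refine Finset.eq_singleton_iff_unique_mem.mpr ⟨hΔ, fun x hx => ?_⟩
        exact le_antisymm (Fin.le_last x) (h ▸ Δ.min'_le x hx)
      have hjlt : j < Fin.last n := lt_of_le_of_ne (Fin.le_last j) hjne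
      set Δ' := Δ.erase j with hΔ'def
      have hΔ'sub : Δ' ⊂ Δ := Finset.erase_ssubset hjΔ
      have hlast' : Fin.last n ∈ Δ' := Finset.mem_erase.mpr ⟨Ne.symm hjne, hΔ⟩
      have hne' : Δ'.Nonempty := ⟨_, hlast'⟩
      set j' := Δ'.min' hne' with hj'
      have hj'Δ' : j' ∈ Δ' := Δ'.min'_mem hne'
      have hj'ne : j' ≠ j := (Finset.mem_erase.mp hj'Δ').1
      have hj'Δ : j' ∈ Δ := Finset.mem_of_mem_erase hj'Δ'
      have hjj' : j < j' := lt_of_le_of_ne (Δ.min'_le _ hj'Δ) (Ne.symm hj'ne)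
      -- sorted lists
      have hsortΔ : Δ.sort (· ≤ ·) = j :: Δ'.sort (· ≤ ·) := by
        conv_lhs => rw [← Finset.insert_erase hjΔ]
        exact Finset.sort_insert _ (fun b hb => Δ.min'_le b (Finset.mem_of_mem_erase hb))
          (Finset.notMem_erase j Δ)
      have hsortΔ' : Δ'.sort (· ≤ ·) = j' :: (Δ'.erase j').sort (· ≤ ·) := by
        conv_lhs => rw [← Finset.insert_erase hj'Δ']
        exact Finset.sort_insert _ (fun b hb => Δ'.min'_le b (Finset.mem_of_mem_erase hb))
          (Finset.notMem_erase j' Δ')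
      have hτ : tauDelta n Δ = tauDelta n Δ' * Equiv.swap j j' := by
        simp only [tauDelta]
        rw [hsortΔ, hsortΔ', List.formPerm_cons_cons, ← hsortΔ', mul_inv_rev, Equiv.swap_inv]
      -- numeric values
      have hcj : ((j.val : ℕ) : Fin (n + 1)) = j := Fin.cast_val_eq_self j
      have hcj' : ((j'.val : ℕ) : Fin (n + 1)) = j' := Fin.cast_val_eq_self j'
      have hjnlt : j.val < n := by
        have := hjlt
        rw [Fin.lt_def, Fin.val_last] at this
        exact this
      have hj'nle : j'.val ≤ n := by have := j'.isLt; omega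
      have hjj'n : j.val < j'.val := by
        have := hjj'
        rwa [Fin.lt_def] at this
      -- list splitting
      have hsplit : List.range n =
          List.range' 0 j.val ++ j.val :: List.range' (j.val + 1) (n - (j.val + 1)) := by
        have h1 := List.range'_append_1 (s := 0) (m := j.val) (n := (n - (j.val + 1)) + 1)
        rw [Nat.zero_add, List.range'_succ] at h1
        have h2 : n = j.val + (n - (j.val + 1) + 1) := by omega
        rw [List.range_eq_range']
        conv_lhs => rw [h2]
        exact h1.symm
      have hmemT : ∀ m ∈ List.range' (j.val + 1) (n - (j.val + 1)), j.val + 1 ≤ m ∧ m < n := by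
        intro m hm; have := aux_mem_range'.mp hm; omega
      have hAp : ∀ q : Finset (Fin (n + 1)), q ⊆ Δ →
          (List.range' 0 j.val).filter (fun m : ℕ => decide ((m : Fin (n + 1)) ∉ q))
          = List.range' 0 j.val := by
        intro q hq
        rw [List.filter_eq_self]
        intro m hm
        have hm' : m < j.val := by have := aux_mem_range'.mp hm; omega
        simp only [decide_eq_true_eq]
        intro hmem
        have hle : j ≤ (m : Fin (n + 1)) := Δ.min'_le _ (hq hmem)
        rw [Fin.le_def, Fin.val_cast_of_lt (by omega)] at hle
        omega
      have hpjn : (fun m : ℕ => decide ((m : Fin (n + 1)) ∉ Δ)) j.val = false := by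
        simp only [hcj, decide_eq_false_iff_not, not_not]
        exact hjΔ
      have hp'jn : (fun m : ℕ => decide ((m : Fin (n + 1)) ∉ Δ')) j.val = true := by
        simp only [hcj, decide_eq_true_eq]
        exact Finset.notMem_erase j Δ
      have hTpp' : (List.range' (j.val + 1) (n - (j.val + 1))).filter
            (fun m : ℕ => decide ((m : Fin (n + 1)) ∉ Δ')) =
          (List.range' (j.val + 1) (n - (j.val + 1))).filter
            (fun m : ℕ => decide ((m : Fin (n + 1)) ∉ Δ)) := by
        apply List.filter_congr
        intro m hm
        have hm' := hmemT m hm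
        have hmne : (m : Fin (n + 1)) ≠ j := by
          rw [← hcj]; exact aux_cast_ne (by omega) (by omega) (by omega)
        simp only [decide_eq_decide]
        rw [hΔ'def, Finset.mem_erase]
        tauto
      set R := (List.range' (j.val + 1) (n - (j.val + 1))).filter
        (fun m : ℕ => decide ((m : Fin (n + 1)) ∉ Δ)) with hRdef
      have hFΔ : (List.range n).filter (fun m : ℕ => decide ((m : Fin (n + 1)) ∉ Δ)) =
          List.range' 0 j.val ++ R := by
        rw [hsplit, List.filter_append, hAp Δ le_rfl,
          List.filter_cons_of_neg (by simp [hcj, hjΔ])]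
      have hFΔ' : (List.range n).filter (fun m : ℕ => decide ((m : Fin (n + 1)) ∉ Δ')) =
          List.range' 0 j.val ++ j.val :: R := by
        rw [hsplit, List.filter_append, hAp Δ' (Finset.erase_subset _ _),
          List.filter_cons_of_pos (by simp [hcj, hΔ'def]), hTpp']
      -- induction hypothesis
      have ih := IH Δ' hΔ'sub hlast'
      rw [hFΔ'] at ih
      -- pointwise facts about R
      have hmemR : ∀ m ∈ R, j.val + 1 ≤ m ∧ m < n := by
        intro m hm; exact hmemT m (List.mem_of_mem_filter hm)
      have hprRj : auxPr n R j = j := by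
        rw [← hcj]
        refine auxPr_fix n R _ (fun m hm => ?_)
        have := hmemR m hm
        exact ⟨aux_cast_ne (by omega) (by omega) (by omega),
          aux_cast_ne (by omega) (by omega) (by omega)⟩
      have hTsplit : List.range' (j.val + 1) (n - (j.val + 1)) =
          List.range' (j.val + 1) (j'.val - (j.val + 1)) ++ List.range' j'.val (n - j'.val) := by
        have h1 := List.range'_append_1 (s := j.val + 1) (m := j'.val - (j.val + 1)) (n := n - j'.val)
        rw [show (j.val + 1) + (j'.val - (j.val + 1)) = j'.val from by omega] at h1
        rw [show n - (j.val + 1) = (j'.val - (j.val + 1)) + (n - j'.val) from by omega, ← h1]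
      have hrunp : (List.range' (j.val + 1) (j'.val - (j.val + 1))).filter
            (fun m : ℕ => decide ((m : Fin (n + 1)) ∉ Δ)) =
          List.range' (j.val + 1) (j'.val - (j.val + 1)) := by
        rw [List.filter_eq_self]
        intro m hm
        have hm' := aux_mem_range'.mp hm
        simp only [decide_eq_true_eq]
        intro hmem
        have hmne : (m : Fin (n + 1)) ≠ j := by
          rw [← hcj]; exact aux_cast_ne (by omega) (by omega) (by omega)
        have hmem' : (m : Fin (n + 1)) ∈ Δ' := Finset.mem_erase.mpr ⟨hmne, hmem⟩
        have hle : j' ≤ (m : Fin (n + 1)) := Δ'.min'_le _ hmem'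
        rw [Fin.le_def, Fin.val_cast_of_lt (by omega)] at hle
        omega
      have hRsplit : R = List.range' (j.val + 1) (j'.val - (j.val + 1)) ++
          (List.range' j'.val (n - j'.val)).filter
            (fun m : ℕ => decide ((m : Fin (n + 1)) ∉ Δ)) := by
        rw [hRdef, hTsplit, List.filter_append, hrunp]
      have hprRj' : auxPr n R j' = ((j.val + 1 : ℕ) : Fin (n + 1)) := by
        rw [hRsplit, auxPr_append, Equiv.Perm.mul_apply]
        have hfix2 : auxPr n ((List.range' j'.val (n - j'.val)).filter
            (fun m : ℕ => decide ((m : Fin (n + 1)) ∉ Δ))) j' = j' := by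
          refine auxPr_fix n _ _ (fun m hm => ?_)
          have hm1 := aux_mem_range'.mp (List.mem_of_mem_filter hm)
          have hm2 : ((m : Fin (n + 1)) ∉ Δ) := by
            have := List.of_mem_filter hm
            simpa using this
          have hmne : m ≠ j'.val := by
            intro h; rw [h, hcj'] at hm2; exact hm2 hj'Δ
          rw [← hcj']
          exact ⟨aux_cast_ne (by omega) (by omega) (by omega),
            aux_cast_ne (by omega) (by omega) (by omega)⟩
        have hrt := auxPr_run_top n (j'.val - (j.val + 1)) (j.val + 1) (by omega)
        rw [show (j.val + 1) + (j'.val - (j.val + 1)) = j'.val from by omega, hcj'] at hrt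
        rw [hfix2]
        exact hrt
      -- conclude
      rw [hτ, ← mul_assoc, ih, hFΔ]
      rw [auxPr_append, auxPr_cons, auxPr_append]
      have hswap : Equiv.swap (auxPr n R j) (auxPr n R j') =
          auxPr n R * Equiv.swap j j' * (auxPr n R)⁻¹ := Equiv.swap_apply_apply _ _ _
      rw [hprRj, hprRj'] at hswap
      have hSjn : auxS n j.val = Equiv.swap j ((j.val + 1 : ℕ) : Fin (n + 1)) := by
        rw [auxS_eq, hcj]
      calc auxPr n (List.range' 0 j.val) * (auxS n j.val * auxPr n R) * Equiv.swap j j'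
          = auxPr n (List.range' 0 j.val) *
            (auxS n j.val * (auxPr n R * Equiv.swap j j' * (auxPr n R)⁻¹) * auxPr n R) := by
            group
        _ = auxPr n (List.range' 0 j.val) * (auxS n j.val * auxS n j.val * auxPr n R) := by
            rw [← hswap, hSjn]
        _ = auxPr n (List.range' 0 j.val) * auxPr n R := by
            rw [hSjn, Equiv.swap_mul_self, one_mul]


/-- `σ⁻¹ τ_Δ` is the product, in increasing order, of the adjacent
transpositions `s_m = (m, m+1)` over all `m ∉ Δ` (i.e. `s_1 ⋯ ŝ_{j_1} ⋯ ŝ_{j_k} ⋯ s_{n-1}`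
with the factors indexed by `Δ` omitted). -/
theorem statement15 (n : ℕ) (hn : 1 ≤ n) (Δ : Finset (Fin (n + 1)))
    (hΔ : Fin.last n ∈ Δ) :
    (sigma n)⁻¹ * tauDelta n Δ =
      (((List.finRange (n + 1)).filter
          (fun a => decide (a < Fin.last n ∧ a ∉ Δ))).map
        (fun a => Equiv.swap a (a + 1))).prod := by
  rw [aux_key n Δ hΔ]
  have hfr : List.finRange (n + 1) = (List.range (n + 1)).map (fun m : ℕ => (m : Fin (n + 1))) := by
    rw [← (show (List.finRange (n + 1)).map Fin.val = List.range (n + 1) from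
      List.ext_getElem (by simp) (fun i _ _ => by simp)), List.map_map]
    have h : (List.finRange (n + 1)).map ((fun m : ℕ => (m : Fin (n + 1))) ∘ Fin.val) =
        (List.finRange (n + 1)).map id :=
      List.map_congr_left (fun a _ => Fin.cast_val_eq_self a)
    rw [h, List.map_id]
  rw [hfr, List.filter_map, List.map_map, List.range_succ, List.filter_append]
  have h1 : ([n] : List ℕ).filter
      ((fun a => decide (a < Fin.last n ∧ a ∉ Δ)) ∘ (fun m : ℕ => (m : Fin (n + 1)))) = [] := by
    have hcn : ((n : ℕ) : Fin (n + 1)) = Fin.last n :=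
      Fin.ext (by rw [Fin.val_cast_of_lt (by omega), Fin.val_last])
    simp [Function.comp, hcn]
  rw [h1, List.append_nil]
  have h2 : (List.range n).filter
      ((fun a => decide (a < Fin.last n ∧ a ∉ Δ)) ∘ (fun m : ℕ => (m : Fin (n + 1)))) =
      (List.range n).filter (fun m : ℕ => decide ((m : Fin (n + 1)) ∉ Δ)) := by
    apply List.filter_congr
    intro m hm
    have hm' := List.mem_range.mp hm
    have hlt : (m : Fin (n + 1)) < Fin.last n := by
      rw [Fin.lt_def, Fin.val_cast_of_lt (by omega), Fin.val_last]; exact hm'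
    simp only [Function.comp, decide_eq_decide]
    tauto
  rw [h2]
  rfl


end ShareshianPairs
end
end

section
/- Let Δ ⊆ {1,…,n} be a subset containing n. Then the Coxeter length (number of inversions) of σ^{-1}τ_Δ equals n − |Δ|. -/
/-
Common setup.  The ambient space is `ℂ^(n+1)` (so the paper's `n` is our `n + 1`,
and the paper's hypothesis `n ≥ 2` becomes `1 ≤ n`).  Coordinates are indexed by
`Fin (n+1)`, zero-indexed, so the paper's index `i ∈ {1, …, n}` is our `i - 1`,
and the paper's `e_n` is `e (Fin.last n)`.
-/

noncomputable section

namespace ShareshianPairs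

private lemma tau_not_mem {n : ℕ} {Δ : Finset (Fin (n + 1))} {x : Fin (n + 1)}
    (hx : x ∉ Δ) : tauDelta n Δ x = x := by
  have h : (Δ.sort (· ≤ ·)).formPerm x = x :=
    List.formPerm_apply_of_notMem (fun hmem => hx ((Finset.mem_sort _).1 hmem))
  rw [tauDelta]
  conv_lhs => rw [← h]
  exact Equiv.symm_apply_apply _ _

private lemma tau_spec {n : ℕ} {Δ : Finset (Fin (n + 1))} (hΔ : Fin.last n ∈ Δ)
    {b : Fin (n + 1)} (hb : b ∈ Δ) :
    ((∀ a ∈ Δ, b ≤ a) ∧ tauDelta n Δ b = Fin.last n) ∨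
    (tauDelta n Δ b ∈ Δ ∧ tauDelta n Δ b < b ∧
      ∀ a ∈ Δ, a < b → a ≤ tauDelta n Δ b) := by
  set l := Δ.sort (· ≤ ·) with hl
  have hnd : l.Nodup := Δ.sort_nodup _
  have hsort : l.Pairwise (· < ·) := List.sortedLT_iff_pairwise.1 Δ.sortedLT_sort
  have hmem : ∀ x : Fin (n + 1), x ∈ l ↔ x ∈ Δ := fun x => Finset.mem_sort _
  obtain ⟨i, hi, hbi⟩ := List.mem_iff_getElem.1 ((hmem b).2 hb)
  have hpos : 0 < l.length := Nat.pos_of_ne_zero (by intro h; omega)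
  have hmono : ∀ (p q : ℕ) (hp : p < l.length) (hq : q < l.length),
      p < q → l[p] < l[q] :=
    fun p q hp hq h => (List.pairwise_iff_getElem.1 hsort) p q hp hq h
  have hform : ∀ (j j' : ℕ) (hj : j < l.length) (hj' : j' < l.length),
      (j + 1) % l.length = j' → tauDelta n Δ (l[j']) = l[j] := by
    intro j j' hj hj' hjj
    subst hjj
    have h1 := List.formPerm_apply_getElem l hnd j hj
    rw [tauDelta, ← hl, ← h1]
    exact Equiv.symm_apply_apply _ _
  rcases Nat.eq_zero_or_pos i with h0 | hipos
  · left
    subst h0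
    constructor
    · intro a ha
      obtain ⟨m, hm, ham⟩ := List.mem_iff_getElem.1 ((hmem a).2 ha)
      rcases Nat.eq_zero_or_pos m with rfl | hmpos
      · rw [← hbi, ← ham]
      · rw [← hbi, ← ham]; exact le_of_lt (hmono 0 m hi hm hmpos)
    · have hlast : l[l.length - 1]'(Nat.sub_lt hpos one_pos) = Fin.last n := by
        refine le_antisymm (Fin.le_last _) ?_
        obtain ⟨m, hm, hlm⟩ := List.mem_iff_getElem.1 ((hmem _).2 hΔ)
        rw [← hlm]
        rcases Nat.lt_or_ge m (l.length - 1) with h | h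
        · exact le_of_lt (hmono m _ hm (Nat.sub_lt hpos one_pos) h)
        · have he : m = l.length - 1 := le_antisymm (by omega) h
          subst he
          exact le_refl _
      have hmod : (l.length - 1 + 1) % l.length = 0 := by
        have : l.length - 1 + 1 = l.length := Nat.succ_pred_eq_of_pos hpos
        rw [this, Nat.mod_self]
      have := hform (l.length - 1) 0 (Nat.sub_lt hpos one_pos) hpos hmod
      rw [← hbi, this, hlast]
  · right
    obtain ⟨j, rfl⟩ : ∃ j, i = j + 1 := ⟨i - 1, (Nat.succ_pred_eq_of_pos hipos).symm⟩
    have htau : tauDelta n Δ b = l[j]'(by omega) := by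
      rw [← hbi]
      exact hform j (j + 1) (by omega) hi (Nat.mod_eq_of_lt hi)
    refine ⟨?_, ?_, ?_⟩
    · rw [htau]; exact (hmem _).1 (List.getElem_mem _)
    · rw [htau, ← hbi]; exact hmono j (j + 1) (by omega) hi (Nat.lt_succ_self j)
    · intro a ha hab
      obtain ⟨m, hm, ham⟩ := List.mem_iff_getElem.1 ((hmem a).2 ha)
      have hmlt : m < j + 1 := by
        by_contra hge
        push_neg at hge
        have hba : b ≤ a := by
          rcases eq_or_lt_of_le hge with he | hlt
          · rw [← hbi, ← ham]
            subst he
            exact le_refl _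
          · rw [← hbi, ← ham]
            exact le_of_lt (hmono (j + 1) m hi hm hlt)
        exact absurd hab (not_lt.2 hba)
      rw [htau, ← ham]
      rcases eq_or_lt_of_le (Nat.lt_succ_iff.1 hmlt) with he | hlt
      · subst he; exact le_refl _
      · exact le_of_lt (hmono m j hm (by omega) hlt)

/-- the Coxeter length (number of inversions) of `σ⁻¹ τ_Δ` equals
`(n+1) - |Δ|` (ambient dimension minus the size of `Δ`). -/
theorem statement16 (n : ℕ) (hn : 1 ≤ n) (Δ : Finset (Fin (n + 1)))
    (hΔ : Fin.last n ∈ Δ) :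
    len n ((sigma n)⁻¹ * tauDelta n Δ) = (n + 1) - Δ.card := by
  classical
  set w := (sigma n)⁻¹ * tauDelta n Δ with hw
  have hwval : ∀ x, w x = finRotate (n + 1) (tauDelta n Δ x) := by
    intro x
    simp [hw, sigma, Equiv.Perm.mul_apply]
  have hwn : ∀ a : Fin (n + 1), a ∉ Δ → (w a : ℕ) = (a : ℕ) + 1 := by
    intro a ha
    have hne : a ≠ Fin.last n := fun h => ha (h.symm ▸ hΔ)
    rw [hwval, tau_not_mem ha, coe_finRotate_of_ne_last hne]
  have hwtau : ∀ b : Fin (n + 1), tauDelta n Δ b < b →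
      (w b : ℕ) = (tauDelta n Δ b : ℕ) + 1 := by
    intro b hlt
    rw [hwval,
      coe_finRotate_of_ne_last (ne_of_lt (lt_of_lt_of_le hlt (Fin.le_last b)))]
  have hwm : ∀ b : Fin (n + 1), b ∈ Δ → (w b : ℕ) ≤ (b : ℕ) := by
    intro b hb
    rcases tau_spec hΔ hb with ⟨_, ht⟩ | ⟨_, hlt, _⟩
    · rw [hwval, ht, finRotate_last]
      exact Nat.zero_le _
    · rw [hwtau b hlt]
      have hlt' : (tauDelta n Δ b : ℕ) < (b : ℕ) := hlt
      omega
  have key1 : ∀ p : Fin (n + 1) × Fin (n + 1), p.1 < p.2 → w p.2 < w p.1 →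
      p.1 ∉ Δ := by
    intro p hlt hinv haΔ
    have h1 : (w p.1 : ℕ) ≤ (p.1 : ℕ) := hwm _ haΔ
    have h5 : (w p.2 : ℕ) < (w p.1 : ℕ) := hinv
    by_cases hbΔ : p.2 ∈ Δ
    · rcases tau_spec hΔ hbΔ with ⟨hmin, _⟩ | ⟨_, hlt2, hpred⟩
      · exact absurd hlt (not_lt.2 (hmin _ haΔ))
      · have h2 : (p.1 : ℕ) ≤ (tauDelta n Δ p.2 : ℕ) := hpred _ haΔ hlt
        have h3 := hwtau _ hlt2
        omega
    · have h2 := hwn _ hbΔ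
      have h6 : (p.1 : ℕ) < (p.2 : ℕ) := hlt
      omega
  have key2 : ∀ p : Fin (n + 1) × Fin (n + 1), p.1 < p.2 → w p.2 < w p.1 →
      p.2 ∈ Δ ∧ ∀ c ∈ Δ, p.1 < c → p.2 ≤ c := by
    intro p hlt hinv
    have ha := key1 p hlt hinv
    have hwa := hwn _ ha
    have h5 : (w p.2 : ℕ) < (w p.1 : ℕ) := hinv
    have hbΔ : p.2 ∈ Δ := by
      by_contra hbΔ
      have h2 := hwn _ hbΔ
      have h6 : (p.1 : ℕ) < (p.2 : ℕ) := hlt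
      omega
    refine ⟨hbΔ, fun c hc hac => ?_⟩
    by_contra hcb
    push_neg at hcb
    rcases tau_spec hΔ hbΔ with ⟨hmin, _⟩ | ⟨_, hlt2, hpred⟩
    · exact absurd hcb (not_lt.2 (hmin _ hc))
    · have h2 : (c : ℕ) ≤ (tauDelta n Δ p.2 : ℕ) := hpred _ hc hcb
      have h3 := hwtau _ hlt2
      have h6 : (p.1 : ℕ) < (c : ℕ) := hac
      omega
  have hnext : ∀ a : Fin (n + 1), a ∉ Δ →
      (Δ.filter (fun x => a < x)).Nonempty := by
    intro a ha
    exact ⟨Fin.last n, Finset.mem_filter.2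
      ⟨hΔ, lt_of_le_of_ne (Fin.le_last a) (fun h => ha (h.symm ▸ hΔ))⟩⟩
  have hcard : len n w = (Finset.univ \ Δ).card := by
    rw [len]
    refine Finset.card_bij' (fun p _ => p.1)
      (fun a ha => (a, (Δ.filter (fun x => a < x)).min'
        (hnext a (Finset.mem_sdiff.1 ha).2))) ?_ ?_ ?_ ?_
    · intro p hp
      rw [Finset.mem_filter] at hp
      exact Finset.mem_sdiff.2 ⟨Finset.mem_univ _, key1 p hp.2.1 hp.2.2⟩
    · intro a ha
      have haΔ := (Finset.mem_sdiff.1 ha).2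
      set b := (Δ.filter (fun x => a < x)).min' (hnext a haΔ) with hbdef
      have hbmem := Finset.min'_mem _ (hnext a haΔ)
      rw [Finset.mem_filter] at hbmem
      obtain ⟨hbΔ, hab⟩ := hbmem
      refine Finset.mem_filter.2 ⟨Finset.mem_univ _, hab, ?_⟩
      have hwa := hwn a haΔ
      show (w b : ℕ) < (w a : ℕ)
      rcases tau_spec hΔ hbΔ with ⟨_, ht⟩ | ⟨htΔ, htlt, _⟩
      · have h0 : (w b : ℕ) = 0 := by
          rw [hwval, ht, finRotate_last]
          rfl
        omega
      · have hta : tauDelta n Δ b < a := by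
          rcases lt_trichotomy (tauDelta n Δ b) a with h | h | h
          · exact h
          · exact absurd (h ▸ htΔ) haΔ
          · have hle : b ≤ tauDelta n Δ b :=
              Finset.min'_le _ _ (Finset.mem_filter.2 ⟨htΔ, h⟩)
            exact absurd htlt (not_lt.2 hle)
        have h3 : (w b : ℕ) = (tauDelta n Δ b : ℕ) + 1 := hwtau _ htlt
        have h4 : (tauDelta n Δ b : ℕ) < (a : ℕ) := hta
        omega
    · intro p hp
      rw [Finset.mem_filter] at hp
      obtain ⟨-, hlt, hinv⟩ := hp
      obtain ⟨hbΔ, hmin⟩ := key2 p hlt hinv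
      have haΔ := key1 p hlt hinv
      have hb2 : (Δ.filter (fun x => p.1 < x)).min' (hnext p.1 haΔ) = p.2 := by
        refine le_antisymm (Finset.min'_le _ _ (Finset.mem_filter.2 ⟨hbΔ, hlt⟩)) ?_
        refine Finset.le_min' _ _ _ fun c hc => ?_
        rw [Finset.mem_filter] at hc
        exact hmin c hc.1 hc.2
      rw [hb2]
    · intro a ha
      rfl
  rw [← hw] at *
  rw [hcard, Finset.card_sdiff_of_subset (Finset.subset_univ _), Finset.card_univ,
    Fintype.card_fin]

end ShareshianPairs
end
end

section
/- The set of Shareshian pairs is preserved by the restricted diagonal monoid action. Precisely, let (w, u*) ∈ S_n × S_n be a Shareshian pair (there exists Δ ⊆ {1,…,n} containing n, decreasing for w^{-1}, with u* = τ_Δ w σ^{-1}). For x ∈ S_n write ℓ*(x) = ℓ(σ^{-1}xσ). Then: (Right action) for every j ∈ {1,…,n−1}, the pair (w', y') is a Shareshian pair, where w' = w s_j if ℓ(w s_j) > ℓ(w) and w' = w otherwise, and y' = u* t_j if ℓ*(u* t_j) > ℓ*(u*) and y' = u* otherwise, with s_j = (j, j+1) and t_j = σ s_j σ^{-1} (the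 transposition swapping σ(j) and σ(j+1)). (Left action) for every i ∈ {1,…,n−2}, the pair (w'', y'') is a Shareshian pair, where w'' = s_i w if ℓ(s_i w) > ℓ(w) and w'' = w otherwise, and y'' = s_i u* if ℓ*(s_i u*) > ℓ*(u*) and y'' = u* otherwise. -/
/-
Common setup.  The ambient space is `ℂ^(n+1)` (so the paper's `n` is our `n + 1`,
and the paper's hypothesis `n ≥ 2` becomes `1 ≤ n`).  Coordinates are indexed by
`Fin (n+1)`, zero-indexed, so the paper's index `i ∈ {1, …, n}` is our `i - 1`,
and the paper's `e_n` is `e (Fin.last n)`.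
-/

noncomputable section

namespace ShareshianPairs

section Aux
variable {n : ℕ}

lemma sigma_inv_apply (x : Fin (n + 1)) : (sigma n)⁻¹ x = x + 1 := by
  simp [sigma]

lemma sigma_apply_add_one (x : Fin (n + 1)) : sigma n (x + 1) = x := by
  have : (sigma n)⁻¹ x = x + 1 := sigma_inv_apply x
  rw [← this, Equiv.Perm.coe_inv, Equiv.apply_symm_apply]

lemma swap_lt {j : Fin (n + 1)} (hj : j < Fin.last n) {p q : Fin (n + 1)}
    (hpq : p < q) (hne : ¬(p = j ∧ q = j + 1)) :
    Equiv.swap j (j + 1) p < Equiv.swap j (j + 1) q := by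
  have hjn : (j : ℕ) < n := by simpa [Fin.lt_def] using hj
  have hj1 : ((j + 1 : Fin (n + 1)) : ℕ) = (j : ℕ) + 1 := Fin.val_add_one_of_lt hj
  rw [Equiv.swap_apply_def, Equiv.swap_apply_def]
  rw [Fin.lt_def] at hpq ⊢
  simp only [Fin.ext_iff] at hne
  split_ifs with h1 h2 h3 h4 h5 <;>
  · rw [Fin.ext_iff] at *
    omega

lemma len_eq_aux {j : Fin (n + 1)} (hj : j < Fin.last n) (x : Equiv.Perm (Fin (n + 1))) :
    len n x =
      (Finset.univ.filter (fun p : Fin (n + 1) × Fin (n + 1) =>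
        (p.1 < p.2 ∧ x p.2 < x p.1) ∧ p ≠ (j, j + 1))).card
      + (if x (j + 1) < x j then 1 else 0) := by
  classical
  have hjlt : j < j + 1 := by
    have := Fin.val_add_one_of_lt hj
    rw [Fin.lt_def, this]; omega
  set c : Fin (n + 1) × Fin (n + 1) := (j, j + 1) with hc
  set S := Finset.univ.filter (fun p : Fin (n + 1) × Fin (n + 1) =>
    p.1 < p.2 ∧ x p.2 < x p.1) with hS
  have hsplit := Finset.card_filter_add_card_filter_not
    (s := S) (p := fun p => p = c)
  have h1 : S.filter (fun p => ¬ p = c) =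
      Finset.univ.filter (fun p : Fin (n + 1) × Fin (n + 1) =>
        (p.1 < p.2 ∧ x p.2 < x p.1) ∧ p ≠ c) := by
    rw [hS, Finset.filter_filter]
  have h2 : (S.filter (fun p => p = c)).card = (if x (j + 1) < x j then 1 else 0) := by
    by_cases hx : x (j + 1) < x j
    · rw [if_pos hx]
      have : S.filter (fun p => p = c) = {c} := by
        ext p
        simp only [Finset.mem_filter, Finset.mem_singleton, hS, Finset.mem_univ, true_and]
        constructor
        · rintro ⟨-, h⟩; exact h
        · rintro rfl; exact ⟨⟨hjlt, hx⟩, rfl⟩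
      rw [this, Finset.card_singleton]
    · rw [if_neg hx]
      have : S.filter (fun p => p = c) = ∅ := by
        ext p
        simp only [Finset.mem_filter, Finset.notMem_empty, iff_false, not_and, hS,
          Finset.mem_univ, true_and]
        rintro ⟨-, h2⟩ rfl
        exact hx h2
      rw [this, Finset.card_empty]
  rw [len, ← hS, ← hsplit, h1, h2, Nat.add_comm]

lemma len_lt_mul_swap_iff (w : Equiv.Perm (Fin (n + 1))) {j : Fin (n + 1)}
    (hj : j < Fin.last n) :
    len n w < len n (w * Equiv.swap j (j + 1)) ↔ w j < w (j + 1) := by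
  classical
  set s := Equiv.swap j (j + 1) with hsdef
  have hss : ∀ p : Fin (n + 1), s (s p) = p := fun p => Equiv.swap_apply_self _ _ _
  have hcard :
      (Finset.univ.filter (fun p : Fin (n + 1) × Fin (n + 1) =>
        (p.1 < p.2 ∧ w p.2 < w p.1) ∧ p ≠ (j, j + 1))).card =
      (Finset.univ.filter (fun p : Fin (n + 1) × Fin (n + 1) =>
        (p.1 < p.2 ∧ (w * s) p.2 < (w * s) p.1) ∧ p ≠ (j, j + 1))).card := by
    apply Finset.card_nbij' (i := fun p => (s p.1, s p.2)) (j := fun p => (s p.1, s p.2))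
    · intro p hp
      simp only [Finset.mem_coe, Finset.mem_filter, Finset.mem_univ, true_and] at hp ⊢
      obtain ⟨⟨hlt, hinv⟩, hne⟩ := hp
      have hne' : ¬(p.1 = j ∧ p.2 = j + 1) := by
        intro ⟨h1, h2⟩; exact hne (Prod.ext h1 h2)
      refine ⟨⟨swap_lt hj hlt hne', ?_⟩, ?_⟩
      · simpa only [Equiv.Perm.mul_apply, hss] using hinv
      · intro h
        have h1 : s p.1 = j := congrArg Prod.fst h
        have h2 : s p.2 = j + 1 := congrArg Prod.snd h
        have hj1 : ((j + 1 : Fin (n + 1)) : ℕ) = (j : ℕ) + 1 := Fin.val_add_one_of_lt hj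
        have e1 : p.1 = j + 1 := by
          have h' := congrArg s h1
          rw [hss] at h'
          rw [h', hsdef, Equiv.swap_apply_left]
        have e2 : p.2 = j := by
          have h' := congrArg s h2
          rw [hss] at h'
          rw [h', hsdef, Equiv.swap_apply_right]
        rw [e1, e2, Fin.lt_def, hj1] at hlt
        omega
    · intro p hp
      simp only [Finset.mem_coe, Finset.mem_filter, Finset.mem_univ, true_and] at hp ⊢
      obtain ⟨⟨hlt, hinv⟩, hne⟩ := hp
      have hne' : ¬(p.1 = j ∧ p.2 = j + 1) := by
        intro ⟨h1, h2⟩; exact hne (Prod.ext h1 h2)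
      refine ⟨⟨swap_lt hj hlt hne', ?_⟩, ?_⟩
      · simpa only [Equiv.Perm.mul_apply, hss] using hinv
      · intro h
        have h1 : s p.1 = j := congrArg Prod.fst h
        have h2 : s p.2 = j + 1 := congrArg Prod.snd h
        have hj1 : ((j + 1 : Fin (n + 1)) : ℕ) = (j : ℕ) + 1 := Fin.val_add_one_of_lt hj
        have e1 : p.1 = j + 1 := by
          have h' := congrArg s h1
          rw [hss] at h'
          rw [h', hsdef, Equiv.swap_apply_left]
        have e2 : p.2 = j := by
          have h' := congrArg s h2
          rw [hss] at h'
          rw [h', hsdef, Equiv.swap_apply_right]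
        rw [e1, e2, Fin.lt_def, hj1] at hlt
        omega
    · intro p hp; exact Prod.ext (hss p.1) (hss p.2)
    · intro p hp; exact Prod.ext (hss p.1) (hss p.2)
  rw [len_eq_aux hj w, len_eq_aux hj (w * s), ← hcard]
  have e1 : (w * s) (j + 1) = w j := by
    rw [Equiv.Perm.mul_apply, hsdef, Equiv.swap_apply_right]
  have e2 : (w * s) j = w (j + 1) := by
    rw [Equiv.Perm.mul_apply, hsdef, Equiv.swap_apply_left]
  rw [e1, e2]
  rcases lt_trichotomy (w j) (w (j + 1)) with h | h | h
  · simp [h, not_lt.mpr h.le]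
  · have : j = j + 1 := w.injective h
    have hj1 : ((j + 1 : Fin (n + 1)) : ℕ) = (j : ℕ) + 1 := Fin.val_add_one_of_lt hj
    rw [Fin.ext_iff, hj1] at this; omega
  · simp [h, not_lt.mpr h.le]

lemma len_inv (w : Equiv.Perm (Fin (n + 1))) : len n w⁻¹ = len n w := by
  classical
  rw [len, len]
  apply Finset.card_nbij' (i := fun p => (w⁻¹ p.2, w⁻¹ p.1)) (j := fun p => (w p.2, w p.1))
  · intro p hp
    simp only [Finset.mem_coe, Finset.mem_filter, Finset.mem_univ, true_and, Equiv.Perm.coe_inv, Equiv.apply_symm_apply] at hp ⊢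
    exact ⟨hp.2, hp.1⟩
  · intro p hp
    simp only [Finset.mem_coe, Finset.mem_filter, Finset.mem_univ, true_and, Equiv.Perm.coe_inv, Equiv.symm_apply_apply] at hp ⊢
    exact ⟨hp.2, hp.1⟩
  · intro p hp; simp
  · intro p hp; simp

lemma tau_apply_of_not_mem {Δ : Finset (Fin (n + 1))} {x : Fin (n + 1)} (hx : x ∉ Δ) :
    tauDelta n Δ x = x := by
  rw [tauDelta, Equiv.Perm.inv_eq_iff_eq]
  exact (List.formPerm_apply_of_notMem (by simpa using hx)).symm

lemma tau_mem {Δ : Finset (Fin (n + 1))} {x : Fin (n + 1)} (hx : x ∈ Δ) :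
    tauDelta n Δ x ∈ Δ := by
  by_contra h
  have := tau_apply_of_not_mem h
  have := (tauDelta n Δ).injective this
  rw [this] at h
  exact h hx

lemma tau_min' {Δ : Finset (Fin (n + 1))} (h : Δ.Nonempty) :
    tauDelta n Δ (Δ.min' h) = Δ.max' h := by
  classical
  have hpos : 0 < (Δ.sort (· ≤ ·)).length := by
    rw [Finset.length_sort]; exact Finset.card_pos.mpr h
  rw [tauDelta, Equiv.Perm.inv_eq_iff_eq]
  rw [Finset.min'_eq_sorted_zero, Finset.max'_eq_sorted_last]
  rw [List.formPerm_apply_getElem _ (Finset.sort_nodup _ _) _ (by omega)]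
  have hmod : ((Δ.sort (· ≤ ·)).length - 1 + 1) % (Δ.sort (· ≤ ·)).length = 0 := by
    rw [Nat.sub_add_cancel hpos, Nat.mod_self]
  simp only [hmod]

lemma tau_apply_gap {Δ : Finset (Fin (n + 1))} {x y : Fin (n + 1)}
    (hx : x ∈ Δ) (hy : y ∈ Δ) (hxy : x < y)
    (gap : ∀ z ∈ Δ, z ≤ x ∨ y ≤ z) : tauDelta n Δ y = x := by
  classical
  set l := Δ.sort (· ≤ ·) with hl
  have hsort : l.Pairwise (· < ·) := (Finset.sortedLT_sort _).pairwise
  have hmono : ∀ (a b : ℕ) (ha : a < l.length) (hb : b < l.length), a < b → l[a] < l[b] := by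
    intro a b ha hb hab
    have := hsort.rel_get_of_lt (a := ⟨a, ha⟩) (b := ⟨b, hb⟩) (by simpa using hab)
    simpa using this
  obtain ⟨ix, hix, hxe⟩ := List.mem_iff_getElem.1 (by
    rw [hl, Finset.mem_sort]; exact hx : x ∈ l)
  obtain ⟨iy, hiy, hye⟩ := List.mem_iff_getElem.1 (by
    rw [hl, Finset.mem_sort]; exact hy : y ∈ l)
  have hixy : ix < iy := by
    rcases lt_trichotomy ix iy with h | h | h
    · exact h
    · exfalso
      subst h
      exact absurd (hxe.symm.trans hye) (ne_of_lt hxy)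
    · exfalso
      have := hmono iy ix hiy hix h
      rw [hxe, hye] at this
      exact absurd hxy (not_lt.2 this.le)
  have hadj : iy = ix + 1 := by
    by_contra hne
    have h1 : ix + 1 < iy := by omega
    have hz : l[ix + 1] ∈ Δ := by
      rw [← Finset.mem_sort (α := Fin (n+1)) (· ≤ ·), ← hl]
      exact List.getElem_mem _
    rcases gap _ hz with h | h
    · have := hmono ix (ix + 1) hix (by omega) (by omega)
      rw [hxe] at this
      exact absurd h (not_le.2 this)
    · have := hmono (ix + 1) iy (by omega) hiy h1
      rw [hye] at this
      exact absurd h (not_le.2 this)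
  rw [tauDelta, Equiv.Perm.inv_eq_iff_eq, ← hl, ← hxe, ← hye]
  rw [List.formPerm_apply_getElem _ (by rw [hl]; exact Finset.sort_nodup _ _) _ hix]
  have hmod : (ix + 1) % l.length = ix + 1 := Nat.mod_eq_of_lt (by omega)
  simp only [hmod, hadj]

lemma tau_pred {Δ : Finset (Fin (n + 1))} {x z0 : Fin (n + 1)}
    (hx : x ∈ Δ) (hz0 : z0 ∈ Δ) (hz0x : z0 < x) :
    tauDelta n Δ x ∈ Δ ∧ tauDelta n Δ x < x ∧ ∀ z ∈ Δ, z < x → z ≤ tauDelta n Δ x := by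
  classical
  set P := Δ.filter (· < x) with hP
  have hPne : P.Nonempty := ⟨z0, by simp [hP, hz0, hz0x]⟩
  have hpP : P.max' hPne ∈ P := P.max'_mem hPne
  have hpΔ : P.max' hPne ∈ Δ := (Finset.mem_filter.1 hpP).1
  have hpx : P.max' hPne < x := by
    have := (Finset.mem_filter.1 hpP).2
    simpa using this
  have gap : ∀ z ∈ Δ, z ≤ P.max' hPne ∨ x ≤ z := by
    intro z hz
    by_cases h : z < x
    · exact Or.inl (P.le_max' z (Finset.mem_filter.2 ⟨hz, by simpa using h⟩))
    · exact Or.inr (not_lt.1 h)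
  have ht := tau_apply_gap hpΔ hx hpx gap
  rw [ht]
  exact ⟨hpΔ, hpx, fun z hz hzx => P.le_max' z (Finset.mem_filter.2 ⟨hz, by simpa using hzx⟩)⟩

lemma tau_succ {Δ : Finset (Fin (n + 1))} {x z0 : Fin (n + 1)}
    (hx : x ∈ Δ) (hz0 : z0 ∈ Δ) (hxz0 : x < z0) :
    (tauDelta n Δ)⁻¹ x ∈ Δ ∧ x < (tauDelta n Δ)⁻¹ x ∧
      ∀ z ∈ Δ, x < z → (tauDelta n Δ)⁻¹ x ≤ z := by
  classical
  set P := Δ.filter (x < ·) with hP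
  have hPne : P.Nonempty := ⟨z0, by simp [hP, hz0, hxz0]⟩
  have hmP : P.min' hPne ∈ P := P.min'_mem hPne
  have hmΔ : P.min' hPne ∈ Δ := (Finset.mem_filter.1 hmP).1
  have hxm : x < P.min' hPne := by
    have := (Finset.mem_filter.1 hmP).2
    simpa using this
  have gap : ∀ z ∈ Δ, z ≤ x ∨ P.min' hPne ≤ z := by
    intro z hz
    by_cases h : x < z
    · exact Or.inr (P.min'_le z (Finset.mem_filter.2 ⟨hz, by simpa using h⟩))
    · exact Or.inl (not_lt.1 h)
  have ht := tau_apply_gap hx hmΔ hxm gap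
  have hinv : (tauDelta n Δ)⁻¹ x = P.min' hPne := by
    rw [← ht, Equiv.Perm.coe_inv, Equiv.symm_apply_apply]
  rw [hinv]
  exact ⟨hmΔ, hxm, fun z hz hxz => P.min'_le z (Finset.mem_filter.2 ⟨hz, by simpa using hxz⟩)⟩

lemma tau_ext {Δ : Finset (Fin (n + 1))} (hne : Δ.Nonempty) (π : Equiv.Perm (Fin (n + 1)))
    (h1 : ∀ x, x ∉ Δ → π x = x)
    (h2 : ∀ x ∈ Δ, ∀ y ∈ Δ, x < y → (∀ z ∈ Δ, z ≤ x ∨ y ≤ z) → π y = x)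
    (h3 : π (Δ.min' hne) = Δ.max' hne) :
    π = tauDelta n Δ := by
  ext x
  by_cases hx : x ∈ Δ
  · by_cases hmin : x = Δ.min' hne
    · rw [hmin, h3, tau_min']
    · have hlt : Δ.min' hne < x := lt_of_le_of_ne (Δ.min'_le x hx) (Ne.symm hmin)
      obtain ⟨hpΔ, hpx, hmax⟩ := tau_pred hx (Δ.min'_mem hne) hlt
      have gap : ∀ z ∈ Δ, z ≤ tauDelta n Δ x ∨ x ≤ z := by
        intro z hz
        by_cases h : z < x
        · exact Or.inl (hmax z hz h)
        · exact Or.inr (not_lt.1 h)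
      rw [h2 _ hpΔ _ hx hpx gap]
  · rw [h1 x hx, tau_apply_of_not_mem hx]

lemma max'_eq_of {Δ : Finset (Fin (n + 1))} (h : Δ.Nonempty) {c : Fin (n + 1)} (hc : c ∈ Δ)
    (hall : ∀ z ∈ Δ, z ≤ c) : Δ.max' h = c :=
  le_antisymm (Finset.max'_le _ _ _ hall) (Finset.le_max' _ _ hc)

lemma min'_eq_of {Δ : Finset (Fin (n + 1))} (h : Δ.Nonempty) {c : Fin (n + 1)} (hc : c ∈ Δ)
    (hall : ∀ z ∈ Δ, c ≤ z) : Δ.min' h = c :=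
  le_antisymm (Finset.min'_le _ _ hc) (Finset.le_min' _ _ _ hall)

lemma tau_insert {Δ : Finset (Fin (n + 1))} (hne : Δ.Nonempty) {a b : Fin (n + 1)}
    (ha : a ∉ Δ) (hb : b ∈ Δ) (hab : a < b)
    (gap : ∀ z ∈ Δ, ¬(a < z ∧ z < b)) :
    tauDelta n (insert a Δ) = tauDelta n Δ * Equiv.swap a b := by
  classical
  have hne' : (insert a Δ).Nonempty := ⟨a, Finset.mem_insert_self a Δ⟩
  refine (tau_ext hne' _ ?_ ?_ ?_).symm
  · intro x hx
    rw [Finset.mem_insert, not_or] at hx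
    obtain ⟨hxa, hxΔ⟩ := hx
    have hxb : x ≠ b := fun h => hxΔ (h ▸ hb)
    rw [Equiv.Perm.mul_apply, Equiv.swap_apply_of_ne_of_ne hxa hxb,
      tau_apply_of_not_mem hxΔ]
  · intro x hx y hy hxy hgap
    rw [Equiv.Perm.mul_apply]
    by_cases hya : y = a
    · rw [hya] at hxy hgap
      rw [hya, Equiv.swap_apply_left]
      have hxΔ : x ∈ Δ := by
        rcases Finset.mem_insert.1 hx with rfl | h
        · exact absurd hxy (lt_irrefl _)
        · exact h
      obtain ⟨hpΔ, hpb, hmax⟩ := tau_pred hb hxΔ (hxy.trans hab)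
      have h1 : x ≤ tauDelta n Δ b := hmax x hxΔ (hxy.trans hab)
      have h2 : tauDelta n Δ b ≤ x := by
        rcases hgap _ (Finset.mem_insert_of_mem hpΔ) with h | h
        · exact h
        · exfalso
          have hne2 : a ≠ tauDelta n Δ b := fun h' => ha (h' ▸ hpΔ)
          exact gap _ hpΔ ⟨lt_of_le_of_ne h hne2, hpb⟩
      exact le_antisymm h2 h1
    · by_cases hyb : y = b
      · rw [hyb] at hxy hgap
        rw [hyb, Equiv.swap_apply_right, tau_apply_of_not_mem ha]
        by_contra hax
        have hxa : x ≠ a := fun hh => hax hh.symm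
        have hxΔ : x ∈ Δ := by
          rcases Finset.mem_insert.1 hx with h | h
          · exact absurd h hxa
          · exact h
        rcases hgap a (Finset.mem_insert_self a Δ) with h | h
        · exact gap x hxΔ ⟨lt_of_le_of_ne h (fun hh => hxa hh.symm), hxy⟩
        · exact absurd hab (not_lt.2 h)
      · have hyΔ : y ∈ Δ := by
          rcases Finset.mem_insert.1 hy with h | h
          · exact absurd h hya
          · exact h
        rw [Equiv.swap_apply_of_ne_of_ne hya hyb]
        by_cases hxa : x = a
        · exfalso
          subst hxa
          have hyb' : b < y := by
            rcases lt_trichotomy y b with h | h | h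
            · exact absurd ⟨hxy, h⟩ (gap y hyΔ)
            · exact absurd h hyb
            · exact h
          rcases hgap b (Finset.mem_insert_of_mem hb) with h | h
          · exact absurd hab (not_lt.2 h)
          · exact absurd hyb' (not_lt.2 h)
        · have hxΔ : x ∈ Δ := by
            rcases Finset.mem_insert.1 hx with h | h
            · exact absurd h hxa
            · exact h
          exact tau_apply_gap hxΔ hyΔ hxy (fun z hz => hgap z (Finset.mem_insert_of_mem hz))
  · have hmax : (insert a Δ).max' hne' = Δ.max' hne := by
      apply max'_eq_of hne' (Finset.mem_insert_of_mem (Δ.max'_mem hne))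
      intro z hz
      rcases Finset.mem_insert.1 hz with rfl | h
      · exact hab.le.trans (Finset.le_max' _ _ hb)
      · exact Finset.le_max' _ _ h
    by_cases hbmin : ∀ z ∈ Δ, b ≤ z
    · have hmin : (insert a Δ).min' hne' = a := by
        apply min'_eq_of hne' (Finset.mem_insert_self a Δ)
        intro z hz
        rcases Finset.mem_insert.1 hz with rfl | h
        · exact le_refl _
        · exact hab.le.trans (hbmin z h)
      have hbmin' : Δ.min' hne = b := min'_eq_of hne hb hbmin
      rw [hmin, hmax, Equiv.Perm.mul_apply, Equiv.swap_apply_left, ← hbmin', tau_min']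
    · push_neg at hbmin
      obtain ⟨z0, hz0, hz0b⟩ := hbmin
      have hz0a : z0 < a := by
        rcases lt_trichotomy z0 a with h | h | h
        · exact h
        · exact absurd (h ▸ hz0) ha
        · exact absurd ⟨h, hz0b⟩ (gap z0 hz0)
      have hmin : (insert a Δ).min' hne' = Δ.min' hne := by
        apply min'_eq_of hne' (Finset.mem_insert_of_mem (Δ.min'_mem hne))
        intro z hz
        rcases Finset.mem_insert.1 hz with rfl | h
        · exact (Δ.min'_le z0 hz0).trans hz0a.le
        · exact Δ.min'_le z h
      have hma : Δ.min' hne ≠ a := fun h => ha (h ▸ Δ.min'_mem hne)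
      have hmb : Δ.min' hne ≠ b := by
        intro h
        have := Δ.min'_le z0 hz0
        rw [h] at this
        exact absurd hz0b (not_lt.2 this)
      rw [hmin, hmax, Equiv.Perm.mul_apply, Equiv.swap_apply_of_ne_of_ne hma hmb, tau_min']

lemma tau_swap_comm {Δ : Finset (Fin (n + 1))} {i : Fin (n + 1)}
    (hi : i ∉ Δ) (hi1 : i + 1 ∉ Δ) :
    Equiv.swap i (i + 1) * tauDelta n Δ = tauDelta n Δ * Equiv.swap i (i + 1) := by
  ext x
  rw [Equiv.Perm.mul_apply, Equiv.Perm.mul_apply]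
  by_cases hx : x = i
  · subst hx
    rw [Equiv.swap_apply_left, tau_apply_of_not_mem hi, tau_apply_of_not_mem hi1,
      Equiv.swap_apply_left]
  · by_cases hx1 : x = i + 1
    · subst hx1
      rw [Equiv.swap_apply_right, tau_apply_of_not_mem hi, tau_apply_of_not_mem hi1,
        Equiv.swap_apply_right]
    · rw [Equiv.swap_apply_of_ne_of_ne hx hx1]
      by_cases hxΔ : x ∈ Δ
      · have hmem := tau_mem hxΔ
        have h1 : tauDelta n Δ x ≠ i := by
          intro h
          rw [h] at hmem
          exact hi hmem
        have h2 : tauDelta n Δ x ≠ i + 1 := by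
          intro h
          rw [h] at hmem
          exact hi1 hmem
        rw [Equiv.swap_apply_of_ne_of_ne h1 h2]
      · rw [tau_apply_of_not_mem hxΔ, Equiv.swap_apply_of_ne_of_ne hx hx1]

lemma tau_conj {Δ : Finset (Fin (n + 1))} {i : Fin (n + 1)} (hiv : (i : ℕ) + 1 < n)
    (hlast : Fin.last n ∈ Δ) (hi : i ∈ Δ) (hi1 : i + 1 ∉ Δ) :
    Equiv.swap i (i + 1) * tauDelta n Δ * Equiv.swap i (i + 1)
      = tauDelta n (insert (i + 1) (Δ.erase i)) := by
  classical
  have hv1 : ((i + 1 : Fin (n + 1)) : ℕ) = (i : ℕ) + 1 :=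
    Fin.val_add_one_of_lt (by rw [Fin.lt_def, Fin.val_last]; omega)
  have hii : i < i + 1 := by rw [Fin.lt_def, hv1]; omega
  have hi1last : i + 1 < Fin.last n := by rw [Fin.lt_def, hv1, Fin.val_last]; omega
  have hilast : i < Fin.last n := hii.trans hi1last
  have hstep : ∀ z : Fin (n + 1), i < z → i + 1 ≤ z := by
    intro z hz
    rw [Fin.lt_def] at hz
    rw [Fin.le_def, hv1]
    omega
  have hne : Δ.Nonempty := ⟨i, hi⟩
  have hne' : (insert (i + 1) (Δ.erase i)).Nonempty := ⟨i + 1, Finset.mem_insert_self _ _⟩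
  have hmemΔ' : ∀ z : Fin (n + 1), z ∈ insert (i + 1) (Δ.erase i) ↔
      (z = i + 1 ∨ (z ≠ i ∧ z ∈ Δ)) := by
    intro z
    rw [Finset.mem_insert, Finset.mem_erase]
  have happ : ∀ x : Fin (n + 1),
      (Equiv.swap i (i + 1) * tauDelta n Δ * Equiv.swap i (i + 1)) x
        = Equiv.swap i (i + 1) (tauDelta n Δ (Equiv.swap i (i + 1) x)) := by
    intro x
    rw [Equiv.Perm.mul_apply, Equiv.Perm.mul_apply]
  have hmaxΔ : Fin.last n ≤ Δ.max' hne := Finset.le_max' _ _ hlast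
  have hmaxne : Δ.max' hne ≠ i ∧ Δ.max' hne ≠ i + 1 := by
    constructor
    · exact fun h => absurd (h ▸ hmaxΔ) (not_le.2 hilast)
    · exact fun h => absurd (h ▸ hmaxΔ) (not_le.2 hi1last)
  apply tau_ext hne'
  · intro x hx
    rw [hmemΔ', not_or] at hx
    obtain ⟨hx1, hx2⟩ := hx
    rw [happ]
    by_cases hxi : x = i
    · subst hxi
      rw [Equiv.swap_apply_left, tau_apply_of_not_mem hi1, Equiv.swap_apply_right]
    · have hxΔ : x ∉ Δ := by
        intro h
        exact hx2 ⟨hxi, h⟩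
      rw [Equiv.swap_apply_of_ne_of_ne hxi hx1, tau_apply_of_not_mem hxΔ,
        Equiv.swap_apply_of_ne_of_ne hxi hx1]
  · intro x hx y hy hxy hgap
    rw [happ]
    have hinotmem : i ∉ insert (i + 1) (Δ.erase i) := by
      rw [hmemΔ', not_or]
      exact ⟨fun h => absurd h (ne_of_lt hii), fun h => h.1 rfl⟩
    by_cases hy1 : y = i + 1
    · subst hy1
      rw [Equiv.swap_apply_right]
      have hxne1 : x ≠ i + 1 := ne_of_lt hxy
      have hxnei : x ≠ i := fun h => hinotmem (h ▸ hx)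
      have hxΔ : x ∈ Δ := by
        rcases (hmemΔ' x).1 hx with h | h
        · exact absurd h hxne1
        · exact h.2
      have hxi : x < i := by
        rcases lt_trichotomy x i with h | h | h
        · exact h
        · exact absurd h hxnei
        · exact absurd hxy (not_lt.2 (hstep x h))
      obtain ⟨hpΔ, hpi, hmaxp⟩ := tau_pred hi hxΔ hxi
      have hs : Equiv.swap i (i + 1) (tauDelta n Δ i) = tauDelta n Δ i := by
        apply Equiv.swap_apply_of_ne_of_ne (ne_of_lt hpi) (ne_of_lt (hpi.trans hii))
      rw [hs]
      have h1 : x ≤ tauDelta n Δ i := hmaxp x hxΔ hxi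
      have h2 : tauDelta n Δ i ≤ x := by
        have hpΔ' : tauDelta n Δ i ∈ insert (i + 1) (Δ.erase i) := by
          rw [hmemΔ']
          exact Or.inr ⟨ne_of_lt hpi, hpΔ⟩
        rcases hgap _ hpΔ' with h | h
        · exact h
        · exact absurd (hpi.trans hii) (not_lt.2 h)
      exact le_antisymm h2 h1
    · by_cases hx1 : x = i + 1
      · subst hx1
        have hynei : y ≠ i := ne_of_gt (hii.trans hxy)
        have hyne1 : y ≠ i + 1 := ne_of_gt hxy
        have hyΔ : y ∈ Δ := by
          rcases (hmemΔ' y).1 hy with h | h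
          · exact absurd h hyne1
          · exact h.2
        have gapΔ : ∀ z ∈ Δ, z ≤ i ∨ y ≤ z := by
          intro z hz
          by_cases h : z ≤ i
          · exact Or.inl h
          · have hz1 : i + 1 ≤ z := hstep z (not_le.1 h)
            have hz1' : i + 1 < z := lt_of_le_of_ne hz1 (fun hh => hi1 (hh ▸ hz))
            have hzΔ' : z ∈ insert (i + 1) (Δ.erase i) := by
              rw [hmemΔ']
              exact Or.inr ⟨ne_of_gt (hii.trans hz1'), hz⟩
            rcases hgap z hzΔ' with h' | h'
            · exact absurd hz1' (not_lt.2 h')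
            · exact Or.inr h'
        have hty : tauDelta n Δ y = i := tau_apply_gap hi hyΔ (hii.trans hxy) gapΔ
        rw [Equiv.swap_apply_of_ne_of_ne hynei hyne1, hty, Equiv.swap_apply_left]
      · have hynei : y ≠ i := fun h => hinotmem (h ▸ hy)
        have hxnei : x ≠ i := fun h => hinotmem (h ▸ hx)
        have hyΔ : y ∈ Δ := by
          rcases (hmemΔ' y).1 hy with h | h
          · exact absurd h hy1
          · exact h.2
        have hxΔ : x ∈ Δ := by
          rcases (hmemΔ' x).1 hx with h | h
          · exact absurd h hx1
          · exact h.2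
        have gapΔ : ∀ z ∈ Δ, z ≤ x ∨ y ≤ z := by
          intro z hz
          by_cases hzi : z = i
          · rw [hzi]
            by_contra hcon
            push_neg at hcon
            obtain ⟨hc1, hc2⟩ := hcon
            have h1y : i + 1 < y := lt_of_le_of_ne (hstep y hc2) (fun hh => hy1 hh.symm)
            have h1Δ' : (i + 1 : Fin (n + 1)) ∈ insert (i + 1) (Δ.erase i) :=
              Finset.mem_insert_self _ _
            rcases hgap _ h1Δ' with h' | h'
            · exact absurd (hc1.trans hii) (not_lt.2 h')
            · exact absurd h1y (not_lt.2 h')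
          · have hzΔ' : z ∈ insert (i + 1) (Δ.erase i) := by
              rw [hmemΔ']
              exact Or.inr ⟨hzi, hz⟩
            exact hgap z hzΔ'
        have hty : tauDelta n Δ y = x := tau_apply_gap hxΔ hyΔ hxy gapΔ
        rw [Equiv.swap_apply_of_ne_of_ne hynei hy1, hty,
          Equiv.swap_apply_of_ne_of_ne hxnei hx1]
  · have hmax' : (insert (i + 1) (Δ.erase i)).max' hne' = Δ.max' hne := by
      apply max'_eq_of hne'
      · rw [hmemΔ']
        exact Or.inr ⟨hmaxne.1, Δ.max'_mem hne⟩
      · intro z hz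
        rcases (hmemΔ' z).1 hz with rfl | h
        · exact (hi1last.le).trans hmaxΔ
        · exact Finset.le_max' _ _ h.2
    rw [hmax', happ]
    by_cases himin : ∀ z ∈ Δ, i ≤ z
    · have hminΔ : Δ.min' hne = i := min'_eq_of hne hi himin
      have hmin' : (insert (i + 1) (Δ.erase i)).min' hne' = i + 1 := by
        apply min'_eq_of hne' (Finset.mem_insert_self _ _)
        intro z hz
        rcases (hmemΔ' z).1 hz with rfl | h
        · exact le_refl _
        · exact hstep z (lt_of_le_of_ne (himin z h.2) (fun hh => h.1 hh.symm))
      have hti : tauDelta n Δ i = Δ.max' hne := by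
        rw [← hminΔ]
        exact tau_min' hne
      rw [hmin', Equiv.swap_apply_right, hti,
        Equiv.swap_apply_of_ne_of_ne hmaxne.1 hmaxne.2]
    · push_neg at himin
      obtain ⟨z0, hz0, hz0i⟩ := himin
      have hminle : Δ.min' hne ≤ z0 := Δ.min'_le z0 hz0
      have hminlt : Δ.min' hne < i := lt_of_le_of_lt hminle hz0i
      have hmin' : (insert (i + 1) (Δ.erase i)).min' hne' = Δ.min' hne := by
        apply min'_eq_of hne'
        · rw [hmemΔ']
          exact Or.inr ⟨ne_of_lt hminlt, Δ.min'_mem hne⟩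
        · intro z hz
          rcases (hmemΔ' z).1 hz with rfl | h
          · exact (hminlt.trans hii).le
          · exact Δ.min'_le z h.2
      rw [hmin',
        Equiv.swap_apply_of_ne_of_ne (ne_of_lt hminlt) (ne_of_lt (hminlt.trans hii)),
        tau_min', Equiv.swap_apply_of_ne_of_ne hmaxne.1 hmaxne.2]

lemma len_lt_swap_mul_iff (w : Equiv.Perm (Fin (n + 1))) {j : Fin (n + 1)}
    (hj : j < Fin.last n) :
    len n w < len n (Equiv.swap j (j + 1) * w) ↔ w⁻¹ j < w⁻¹ (j + 1) := by
  rw [← len_inv w, ← len_inv (Equiv.swap j (j + 1) * w)]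
  have h : (Equiv.swap j (j + 1) * w)⁻¹ = w⁻¹ * Equiv.swap j (j + 1) := by
    rw [mul_inv_rev, Equiv.swap_inv]
  rw [h]
  exact len_lt_mul_swap_iff w⁻¹ hj

lemma sigma_inv_lt_iff {u v : Fin (n + 1)} (hne : u ≠ v) :
    (sigma n)⁻¹ u < (sigma n)⁻¹ v ↔
      (u = Fin.last n ∨ (v ≠ Fin.last n ∧ u < v)) := by
  have hu := u.isLt
  have hv := v.isLt
  have hne' : (u : ℕ) ≠ (v : ℕ) := fun h => hne (Fin.ext h)
  rw [sigma_inv_apply, sigma_inv_apply]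
  simp only [Fin.lt_def, Fin.val_add_one, Fin.ext_iff, Fin.val_last, Ne]
  split_ifs with h1 h2 h2 <;> omega

lemma case_facts {Δ : Finset (Fin (n + 1))} (hlastΔ : Fin.last n ∈ Δ) {a b : Fin (n + 1)}
    (hba : b < a)
    (hf : (sigma n)⁻¹ (tauDelta n Δ a) < (sigma n)⁻¹ (tauDelta n Δ b)) :
    a ∈ Δ ∧ b ∉ Δ ∧ ∀ z ∈ Δ, ¬(b < z ∧ z < a) := by
  classical
  have hne : Δ.Nonempty := ⟨_, hlastΔ⟩
  have hmax : Δ.max' hne = Fin.last n := max'_eq_of hne hlastΔ (fun z _ => Fin.le_last z)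
  have hτne : tauDelta n Δ a ≠ tauDelta n Δ b :=
    fun h => (ne_of_gt hba) ((tauDelta n Δ).injective h)
  have hiff := (sigma_inv_lt_iff hτne).1 hf
  have hmin_case : ∀ x ∈ Δ, (∀ z ∈ Δ, x ≤ z) → tauDelta n Δ x = Fin.last n := by
    intro x hx hxmin
    have h : Δ.min' hne = x := min'_eq_of hne hx hxmin
    rw [← h, tau_min', hmax]
  have haΔ : a ∈ Δ := by
    by_contra haΔ
    have hta : tauDelta n Δ a = a := tau_apply_of_not_mem haΔ
    have halast : a ≠ Fin.last n := fun h => haΔ (h ▸ hlastΔ)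
    rw [hta] at hiff
    rcases hiff with h | ⟨hτbl, hlt⟩
    · exact halast h
    · by_cases hbΔ : b ∈ Δ
      · by_cases hbmin : ∀ z ∈ Δ, b ≤ z
        · exact hτbl (hmin_case b hbΔ hbmin)
        · push_neg at hbmin
          obtain ⟨z0, hz0, hz0b⟩ := hbmin
          obtain ⟨-, htlt, -⟩ := tau_pred hbΔ hz0 hz0b
          exact absurd (hlt.trans htlt) (not_lt.2 hba.le)
      · rw [tau_apply_of_not_mem hbΔ] at hlt
        exact absurd hlt (not_lt.2 hba.le)
  have hbΔ : b ∉ Δ := by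
    intro hbΔ
    obtain ⟨htaΔ, htalt, hmaxp⟩ := tau_pred haΔ hbΔ hba
    have hbta : b ≤ tauDelta n Δ a := hmaxp b hbΔ hba
    have htalast : tauDelta n Δ a ≠ Fin.last n :=
      ne_of_lt (lt_of_lt_of_le htalt (Fin.le_last a))
    rcases hiff with h | ⟨hτbl, hlt⟩
    · exact htalast h
    · by_cases hbmin : ∀ z ∈ Δ, b ≤ z
      · exact hτbl (hmin_case b hbΔ hbmin)
      · push_neg at hbmin
        obtain ⟨z0, hz0, hz0b⟩ := hbmin
        obtain ⟨-, htblt, -⟩ := tau_pred hbΔ hz0 hz0b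
        exact absurd (hlt.trans (htblt.trans_le hbta)) (lt_irrefl _)
  refine ⟨haΔ, hbΔ, ?_⟩
  rintro z hz ⟨hz1, hz2⟩
  obtain ⟨-, htalt, hmaxp⟩ := tau_pred haΔ hz hz2
  have hzta : z ≤ tauDelta n Δ a := hmaxp z hz hz2
  have htalast : tauDelta n Δ a ≠ Fin.last n := ne_of_lt (htalt.trans_le (Fin.le_last a))
  rcases hiff with h | ⟨hτbl, hlt⟩
  · exact htalast h
  · rw [tau_apply_of_not_mem hbΔ] at hlt
    exact absurd ((hz1.trans_le hzta).trans hlt) (lt_irrefl _)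

lemma group_aux1 {G : Type*} [Group G] (s t w σ' : G) (hss : s * s = 1) :
    s * (s * t * s * w * σ') = t * (s * w) * σ' := by
  have h : s * (s * t * s * w * σ') = (s * s) * t * (s * w) * σ' := by group
  rw [h, hss, one_mul]

lemma group_aux2 {G : Type*} [Group G] (s t w σ' : G) (hss : s * s = 1) :
    s * (t * w * σ') = s * t * s * (s * w) * σ' := by
  have h : s * t * s * (s * w) * σ' = s * t * (s * s) * w * σ' := by group
  rw [h, hss, mul_one]
  group

lemma group_aux3 {G : Type*} [Group G] (t w s σ' : G) (hss : s * s = 1) :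
    t * (w * s * w⁻¹) * (w * s) * σ' = t * w * σ' := by
  have h : t * (w * s * w⁻¹) * (w * s) * σ' = t * (w * (s * s)) * σ' := by group
  rw [h, hss, mul_one]

lemma group_aux4 {G : Type*} [Group G] (t s w σ' : G) (hss : s * s = 1) :
    t * s * (s * w) * σ' = t * w * σ' := by
  have h : t * s * (s * w) * σ' = t * (s * s) * w * σ' := by group
  rw [h, hss, mul_one]

end Aux

/-- the set of Shareshian pairs is preserved by the restricted
diagonal monoid action.  Right action by `s_j = (j, j+1)`, `j = 1, …, n-1`
(acting on the second coordinate by `t_j = σ s_j σ⁻¹`, with lengths measured by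
`ℓ* = lenStar`), and left action by `s_i`, `i = 1, …, n-2`. -/
theorem statement19 (n : ℕ) (hn : 1 ≤ n) (w ustar : Equiv.Perm (Fin (n + 1)))
    (hpair : IsShPair n w ustar) :
    (∀ j : Fin (n + 1), j < Fin.last n →
      IsShPair n
        (if len n w < len n (w * Equiv.swap j (j + 1))
          then w * Equiv.swap j (j + 1) else w)
        (if lenStar n ustar <
            lenStar n (ustar * (sigma n * Equiv.swap j (j + 1) * (sigma n)⁻¹))
          then ustar * (sigma n * Equiv.swap j (j + 1) * (sigma n)⁻¹) else ustar)) ∧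
    (∀ i : Fin (n + 1), (i : ℕ) + 1 < n →
      IsShPair n
        (if len n w < len n (Equiv.swap i (i + 1) * w)
          then Equiv.swap i (i + 1) * w else w)
        (if lenStar n ustar < lenStar n (Equiv.swap i (i + 1) * ustar)
          then Equiv.swap i (i + 1) * ustar else ustar)) := by
  classical
  obtain ⟨Δ, hlastΔ, hdec, hu⟩ := hpair
  have hneΔ : Δ.Nonempty := ⟨_, hlastΔ⟩
  constructor
  · -- right action
    intro j hj
    have hjv : (j : ℕ) < n := by rw [Fin.lt_def, Fin.val_last] at hj; exact hj
    have hj1v : ((j + 1 : Fin (n + 1)) : ℕ) = (j : ℕ) + 1 := Fin.val_add_one_of_lt hj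
    have hjlt : j < j + 1 := by rw [Fin.lt_def, hj1v]; omega
    have hC1 : (len n w < len n (w * Equiv.swap j (j + 1))) ↔ w j < w (j + 1) :=
      len_lt_mul_swap_iff w hj
    have hgrp : (sigma n)⁻¹ * (ustar * (sigma n * Equiv.swap j (j + 1) * (sigma n)⁻¹)) * sigma n
        = ((sigma n)⁻¹ * ustar * sigma n) * Equiv.swap j (j + 1) := by group
    have hvw : (sigma n)⁻¹ * ustar * sigma n = (sigma n)⁻¹ * tauDelta n Δ * w := by
      rw [hu]; group
    have hC2 : (lenStar n ustar <
          lenStar n (ustar * (sigma n * Equiv.swap j (j + 1) * (sigma n)⁻¹)))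
        ↔ (sigma n)⁻¹ (tauDelta n Δ (w j)) < (sigma n)⁻¹ (tauDelta n Δ (w (j + 1))) := by
      rw [lenStar, lenStar, hgrp, hvw, len_lt_mul_swap_iff _ hj]
      simp only [Equiv.Perm.mul_apply]
    have hss : Equiv.swap j (j + 1) * Equiv.swap j (j + 1) = 1 := Equiv.swap_mul_self _ _
    have hswap : Equiv.swap (w j) (w (j + 1)) = w * Equiv.swap j (j + 1) * w⁻¹ :=
      Equiv.swap_apply_apply w j (j + 1)
    have hwinv : (w * Equiv.swap j (j + 1))⁻¹ = Equiv.swap j (j + 1) * w⁻¹ := by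
      rw [mul_inv_rev, Equiv.swap_inv]
    have hwa : w⁻¹ (w j) = j := w.symm_apply_apply j
    have hwb : w⁻¹ (w (j + 1)) = j + 1 := w.symm_apply_apply (j + 1)
    by_cases hab : w j < w (j + 1)
    · by_cases hf : (sigma n)⁻¹ (tauDelta n Δ (w j)) < (sigma n)⁻¹ (tauDelta n Δ (w (j + 1)))
      · -- case I
        rw [if_pos (hC1.mpr hab), if_pos (hC2.mpr hf)]
        refine ⟨Δ, hlastΔ, ?_, ?_⟩
        · intro x hx y hy hxy
          rw [hwinv]
          simp only [Equiv.Perm.mul_apply]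
          apply swap_lt hj (hdec x hx y hy hxy)
          rintro ⟨h1, h2⟩
          have hy' : y = w j := by
            have h := congrArg w h1
            rwa [Equiv.Perm.coe_inv, Equiv.apply_symm_apply] at h
          have hx' : x = w (j + 1) := by
            have h := congrArg w h2
            rwa [Equiv.Perm.coe_inv, Equiv.apply_symm_apply] at h
          rw [hx', hy'] at hxy
          exact absurd (hxy.trans hab) (lt_irrefl _)
        · rw [hu]; group
      · -- case II
        rw [if_pos (hC1.mpr hab), if_neg (fun h => hf (hC2.mp h))]
        have habne : tauDelta n Δ (w j) ≠ tauDelta n Δ (w (j + 1)) :=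
          fun h => (ne_of_lt hab) ((tauDelta n Δ).injective h)
        have hf' : (sigma n)⁻¹ (tauDelta n Δ (w (j + 1)))
            < (sigma n)⁻¹ (tauDelta n Δ (w j)) :=
          lt_of_le_of_ne (not_lt.1 hf)
            (fun h => habne (((sigma n)⁻¹).injective h).symm)
        obtain ⟨hbΔ, haΔ, hgap⟩ := case_facts hlastΔ hab hf'
        refine ⟨insert (w j) Δ, Finset.mem_insert_of_mem hlastΔ, ?_, ?_⟩
        · intro x hx y hy hxy
          rw [hwinv]
          simp only [Equiv.Perm.mul_apply]
          have hfix : ∀ z ∈ Δ, z ≠ w (j + 1) → Equiv.swap j (j + 1) (w⁻¹ z) = w⁻¹ z := by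
            intro z hz hzb
            apply Equiv.swap_apply_of_ne_of_ne
            · intro h
              have h' := congrArg w h
              rw [Equiv.Perm.coe_inv, Equiv.apply_symm_apply] at h'
              rw [h'] at hz
              exact haΔ hz
            · intro h
              have h' := congrArg w h
              rw [Equiv.Perm.coe_inv, Equiv.apply_symm_apply] at h'
              exact hzb h'
          rcases Finset.mem_insert.1 hx with rfl | hxΔ
          · rcases Finset.mem_insert.1 hy with rfl | hyΔ
            · exact absurd hxy (lt_irrefl _)
            · rw [hwa, Equiv.swap_apply_left]
              by_cases hyb : y = w (j + 1)
              · rw [hyb, hwb, Equiv.swap_apply_right]; exact hjlt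
              · have hby : w (j + 1) < y := by
                  rcases lt_trichotomy y (w (j + 1)) with h | h | h
                  · exact absurd ⟨hxy, h⟩ (hgap y hyΔ)
                  · exact absurd h hyb
                  · exact h
                rw [hfix y hyΔ hyb]
                have h := hdec _ hbΔ _ hyΔ hby
                rwa [hwb] at h
          · rcases Finset.mem_insert.1 hy with rfl | hyΔ
            · rw [hwa, Equiv.swap_apply_left]
              have hxb : x ≠ w (j + 1) := ne_of_lt (hxy.trans hab)
              rw [hfix x hxΔ hxb]
              have h := hdec x hxΔ _ hbΔ (hxy.trans hab)
              rwa [hwb] at h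
            · by_cases hxb : x = w (j + 1)
              · rw [hxb, hwb, Equiv.swap_apply_right]
                have hby : w (j + 1) < y := hxb ▸ hxy
                have hyb : y ≠ w (j + 1) := ne_of_gt hby
                rw [hfix y hyΔ hyb]
                have h1 := hdec _ hbΔ _ hyΔ hby
                rw [hwb] at h1
                have h2 : w⁻¹ y ≠ j := by
                  intro h
                  have h' := congrArg w h
                  rw [Equiv.Perm.coe_inv, Equiv.apply_symm_apply] at h'
                  rw [h'] at hyΔ
                  exact haΔ hyΔ
                have h2' : ((w⁻¹ y : Fin (n + 1)) : ℕ) ≠ (j : ℕ) := fun h => h2 (Fin.ext h)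
                rw [Fin.lt_def] at h1 ⊢
                rw [hj1v] at h1
                omega
              · by_cases hyb : y = w (j + 1)
                · rw [hyb, hwb, Equiv.swap_apply_right]
                  rw [hfix x hxΔ hxb]
                  have h := hdec x hxΔ _ hbΔ (hyb ▸ hxy)
                  rw [hwb] at h
                  exact hjlt.trans h
                · rw [hfix x hxΔ hxb, hfix y hyΔ hyb]
                  exact hdec x hxΔ y hyΔ hxy
        · rw [hu, tau_insert hneΔ haΔ hbΔ hab hgap, hswap]
          exact (group_aux3 (tauDelta n Δ) w (Equiv.swap j (j + 1)) (sigma n)⁻¹ hss).symm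
    · by_cases hf : (sigma n)⁻¹ (tauDelta n Δ (w j)) < (sigma n)⁻¹ (tauDelta n Δ (w (j + 1)))
      · -- case III
        rw [if_neg (fun h => hab (hC1.mp h)), if_pos (hC2.mpr hf)]
        have hba : w (j + 1) < w j := by
          rcases lt_trichotomy (w j) (w (j + 1)) with h | h | h
          · exact absurd h hab
          · exact absurd (w.injective h) (ne_of_lt hjlt)
          · exact h
        obtain ⟨haΔ, hbΔ, hgap⟩ := case_facts hlastΔ hba hf
        refine ⟨insert (w (j + 1)) Δ, Finset.mem_insert_of_mem hlastΔ, ?_, ?_⟩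
        · intro x hx y hy hxy
          rcases Finset.mem_insert.1 hx with rfl | hxΔ
          · rcases Finset.mem_insert.1 hy with rfl | hyΔ
            · exact absurd hxy (lt_irrefl _)
            · rw [hwb]
              by_cases hya : y = w j
              · rw [hya, hwa]; exact hjlt
              · have h1 : w j < y := by
                  rcases lt_trichotomy y (w j) with h | h | h
                  · exact absurd ⟨hxy, h⟩ (hgap y hyΔ)
                  · exact absurd h hya
                  · exact h
                have h := hdec _ haΔ _ hyΔ h1
                rw [hwa] at h
                exact h.trans hjlt
          · rcases Finset.mem_insert.1 hy with rfl | hyΔ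
            · rw [hwb]
              have h1 := hdec x hxΔ _ haΔ (hxy.trans hba)
              rw [hwa] at h1
              have h2 : w⁻¹ x ≠ j + 1 := by
                intro h
                have h' := congrArg w h
                rw [Equiv.Perm.coe_inv, Equiv.apply_symm_apply] at h'
                rw [h'] at hxΔ
                exact hbΔ hxΔ
              have h2' : ((w⁻¹ x : Fin (n + 1)) : ℕ) ≠ ((j + 1 : Fin (n + 1)) : ℕ) :=
                fun h => h2 (Fin.ext h)
              rw [Fin.lt_def] at h1 ⊢
              rw [hj1v] at h2' ⊢
              omega
            · exact hdec x hxΔ y hyΔ hxy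
        · rw [hu, tau_insert hneΔ hbΔ haΔ hba hgap, Equiv.swap_comm (w (j + 1)) (w j), hswap]
          group
      · -- case IV
        rw [if_neg (fun h => hab (hC1.mp h)), if_neg (fun h => hf (hC2.mp h))]
        exact ⟨Δ, hlastΔ, hdec, hu⟩
  · -- left action
    intro i hi
    have hiv : (i : ℕ) + 1 < n := hi
    have hilast : i < Fin.last n := by rw [Fin.lt_def, Fin.val_last]; omega
    have hv1 : ((i + 1 : Fin (n + 1)) : ℕ) = (i : ℕ) + 1 := Fin.val_add_one_of_lt hilast
    have hi1last : i + 1 < Fin.last n := by rw [Fin.lt_def, hv1, Fin.val_last]; omega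
    have hii : i < i + 1 := by rw [Fin.lt_def, hv1]; omega
    have hstep : ∀ z : Fin (n + 1), i < z → i + 1 ≤ z := by
      intro z hz
      rw [Fin.lt_def] at hz
      rw [Fin.le_def, hv1]
      omega
    have hlt_of : ∀ x : Fin (n + 1), x < i + 1 → x ≠ i → x < i := by
      intro x h1 h2
      have h2' : (x : ℕ) ≠ (i : ℕ) := fun h => h2 (Fin.ext h)
      rw [Fin.lt_def, hv1] at h1
      rw [Fin.lt_def]
      omega
    have hss : Equiv.swap i (i + 1) * Equiv.swap i (i + 1) = 1 := Equiv.swap_mul_self _ _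
    have hsinv : (Equiv.swap i (i + 1) * w)⁻¹ = w⁻¹ * Equiv.swap i (i + 1) := by
      rw [mul_inv_rev, Equiv.swap_inv]
    have hC1 : (len n w < len n (Equiv.swap i (i + 1) * w)) ↔ w⁻¹ i < w⁻¹ (i + 1) :=
      len_lt_swap_mul_iff w hilast
    have hσi : (sigma n)⁻¹ i = i + 1 := sigma_inv_apply i
    have hσi1 : (sigma n)⁻¹ (i + 1) = i + 1 + 1 := sigma_inv_apply (i + 1)
    have hconj : Equiv.swap (i + 1) (i + 1 + 1) = (sigma n)⁻¹ * Equiv.swap i (i + 1) * sigma n := by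
      have h := Equiv.swap_apply_apply (sigma n)⁻¹ i (i + 1)
      rw [hσi, hσi1, inv_inv] at h
      exact h
    have hC2 : (lenStar n ustar < lenStar n (Equiv.swap i (i + 1) * ustar)) ↔
        w⁻¹ ((tauDelta n Δ)⁻¹ i) < w⁻¹ ((tauDelta n Δ)⁻¹ (i + 1)) := by
      rw [lenStar, lenStar]
      have hg : (sigma n)⁻¹ * (Equiv.swap i (i + 1) * ustar) * sigma n
          = ((sigma n)⁻¹ * Equiv.swap i (i + 1) * sigma n)
            * ((sigma n)⁻¹ * ustar * sigma n) := by group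
      rw [hg, ← hconj, len_lt_swap_mul_iff _ hi1last]
      have hx : ((sigma n)⁻¹ * ustar * sigma n)⁻¹ = w⁻¹ * (tauDelta n Δ)⁻¹ * sigma n := by
        rw [hu]; group
      rw [hx]
      simp only [Equiv.Perm.mul_apply]
      rw [sigma_apply_add_one i, sigma_apply_add_one (i + 1)]
    by_cases hiΔ : i ∈ Δ
    · by_cases hi1Δ : i + 1 ∈ Δ
      · -- case B
        have hd1 := hdec i hiΔ (i + 1) hi1Δ hii
        have hgap_adj : ∀ z ∈ Δ, z ≤ i ∨ i + 1 ≤ z := by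
          intro z hz
          by_cases h : z ≤ i
          · exact Or.inl h
          · exact Or.inr (hstep z (not_le.1 h))
        have ht1 : tauDelta n Δ (i + 1) = i := tau_apply_gap hiΔ hi1Δ hii hgap_adj
        have hτi : (tauDelta n Δ)⁻¹ i = i + 1 := by
          rw [Equiv.Perm.inv_eq_iff_eq]
          exact ht1.symm
        obtain ⟨hmΔ, hmgt, -⟩ := tau_succ hi1Δ hlastΔ hi1last
        have hd2 := hdec (i + 1) hi1Δ _ hmΔ hmgt
        rw [if_neg (fun h => absurd (hC1.mp h) (not_lt.2 hd1.le)),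
          if_neg (fun h => by
            have h' := hC2.mp h
            rw [hτi] at h'
            exact absurd h' (not_lt.2 hd2.le))]
        exact ⟨Δ, hlastΔ, hdec, hu⟩
      · -- case C
        obtain ⟨hmΔ, hmgt, hmmin⟩ := tau_succ hiΔ hlastΔ hilast
        have ht2 : (tauDelta n Δ)⁻¹ (i + 1) = i + 1 := by
          rw [Equiv.Perm.inv_eq_iff_eq]
          exact (tau_apply_of_not_mem hi1Δ).symm
        have hm1 : i + 1 < (tauDelta n Δ)⁻¹ i :=
          lt_of_le_of_ne (hstep _ hmgt) (fun h => hi1Δ (by rw [h]; exact hmΔ))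
        have hdm := hdec i hiΔ _ hmΔ hmgt
        by_cases hc1 : w⁻¹ i < w⁻¹ (i + 1)
        · -- C1
          have hc2' : w⁻¹ ((tauDelta n Δ)⁻¹ i) < w⁻¹ ((tauDelta n Δ)⁻¹ (i + 1)) := by
            rw [ht2]
            exact hdm.trans hc1
          rw [if_pos (hC1.mpr hc1), if_pos (hC2.mpr hc2')]
          have hlast'' : Fin.last n ∈ insert (i + 1) (Δ.erase i) :=
            Finset.mem_insert_of_mem (Finset.mem_erase.2 ⟨ne_of_gt hilast, hlastΔ⟩)
          refine ⟨insert (i + 1) (Δ.erase i), hlast'', ?_, ?_⟩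
          · intro x hx y hy hxy
            rw [hsinv]
            simp only [Equiv.Perm.mul_apply]
            rcases Finset.mem_insert.1 hx with rfl | hxE
            · rcases Finset.mem_insert.1 hy with rfl | hyE
              · exact absurd hxy (lt_irrefl _)
              · obtain ⟨hyi, hyΔ⟩ := Finset.mem_erase.1 hyE
                have hy1 : y ≠ i + 1 := ne_of_gt hxy
                rw [Equiv.swap_apply_of_ne_of_ne hyi hy1, Equiv.swap_apply_right]
                exact hdec i hiΔ y hyΔ (hii.trans hxy)
            · obtain ⟨hxi, hxΔ⟩ := Finset.mem_erase.1 hxE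
              rcases Finset.mem_insert.1 hy with rfl | hyE
              · have hx1 : x ≠ i + 1 := ne_of_lt hxy
                rw [Equiv.swap_apply_right, Equiv.swap_apply_of_ne_of_ne hxi hx1]
                exact hdec x hxΔ i hiΔ (hlt_of x hxy hxi)
              · obtain ⟨hyi, hyΔ⟩ := Finset.mem_erase.1 hyE
                have hx1 : x ≠ i + 1 := fun h => hi1Δ (by rw [← h]; exact hxΔ)
                have hy1 : y ≠ i + 1 := fun h => hi1Δ (by rw [← h]; exact hyΔ)
                rw [Equiv.swap_apply_of_ne_of_ne hyi hy1,
                  Equiv.swap_apply_of_ne_of_ne hxi hx1]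
                exact hdec x hxΔ y hyΔ hxy
          · have hconj2 : Equiv.swap i (i + 1) * tauDelta n Δ * Equiv.swap i (i + 1)
                = tauDelta n (insert (i + 1) (Δ.erase i)) :=
              tau_conj hiv hlastΔ hiΔ hi1Δ
            rw [hu, ← hconj2]
            exact group_aux2 (Equiv.swap i (i + 1)) (tauDelta n Δ) w (sigma n)⁻¹ hss
        · by_cases hc2 : w⁻¹ ((tauDelta n Δ)⁻¹ i) < w⁻¹ (i + 1)
          · -- C2
            have hc2' : w⁻¹ ((tauDelta n Δ)⁻¹ i) < w⁻¹ ((tauDelta n Δ)⁻¹ (i + 1)) := by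
              rw [ht2]; exact hc2
            rw [if_neg (fun h => hc1 (hC1.mp h)), if_pos (hC2.mpr hc2')]
            have hd : w⁻¹ (i + 1) < w⁻¹ i :=
              lt_of_le_of_ne (not_lt.1 hc1) (fun h => (ne_of_gt hii) ((w⁻¹).injective h))
            refine ⟨insert (i + 1) Δ, Finset.mem_insert_of_mem hlastΔ, ?_, ?_⟩
            · intro x hx y hy hxy
              rcases Finset.mem_insert.1 hx with rfl | hxΔ
              · rcases Finset.mem_insert.1 hy with rfl | hyΔ
                · exact absurd hxy (lt_irrefl _)
                · have hym : (tauDelta n Δ)⁻¹ i ≤ y := hmmin y hyΔ (hii.trans hxy)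
                  rcases eq_or_lt_of_le hym with h | h
                  · rw [← h]; exact hc2
                  · exact (hdec _ hmΔ y hyΔ h).trans hc2
              · rcases Finset.mem_insert.1 hy with rfl | hyΔ
                · by_cases hxi : x = i
                  · rw [hxi]; exact hd
                  · exact hd.trans (hdec x hxΔ i hiΔ (hlt_of x hxy hxi))
                · exact hdec x hxΔ y hyΔ hxy
            · have hgapm : ∀ z ∈ Δ, ¬(i + 1 < z ∧ z < (tauDelta n Δ)⁻¹ i) := by
                rintro z hz ⟨h1, h2⟩
                exact absurd (hmmin z hz (hii.trans h1)) (not_le.2 h2)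
              have hins : tauDelta n (insert (i + 1) Δ)
                  = tauDelta n Δ * Equiv.swap (i + 1) ((tauDelta n Δ)⁻¹ i) :=
                tau_insert hneΔ hi1Δ hmΔ hm1 hgapm
              have hsw : Equiv.swap (i + 1) ((tauDelta n Δ)⁻¹ i)
                  = (tauDelta n Δ)⁻¹ * Equiv.swap i (i + 1) * tauDelta n Δ := by
                have h := Equiv.swap_apply_apply (tauDelta n Δ)⁻¹ i (i + 1)
                rw [inv_inv, ht2] at h
                rw [Equiv.swap_comm]
                exact h
              rw [hu, hins, hsw]
              group
          · -- C3
            rw [if_neg (fun h => hc1 (hC1.mp h)), if_neg (fun h => by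
              have h' := hC2.mp h
              rw [ht2] at h'
              exact hc2 h')]
            exact ⟨Δ, hlastΔ, hdec, hu⟩
    · by_cases hi1Δ : i + 1 ∈ Δ
      · -- case D
        obtain ⟨hmΔ, hmgt, hmmin⟩ := tau_succ hi1Δ hlastΔ hi1last
        have ht1 : (tauDelta n Δ)⁻¹ i = i := by
          rw [Equiv.Perm.inv_eq_iff_eq]
          exact (tau_apply_of_not_mem hiΔ).symm
        have hdm := hdec (i + 1) hi1Δ _ hmΔ hmgt
        by_cases hc2 : w⁻¹ i < w⁻¹ ((tauDelta n Δ)⁻¹ (i + 1))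
        · -- D1
          have hc1 : w⁻¹ i < w⁻¹ (i + 1) := hc2.trans hdm
          have hc2' : w⁻¹ ((tauDelta n Δ)⁻¹ i) < w⁻¹ ((tauDelta n Δ)⁻¹ (i + 1)) := by
            rw [ht1]; exact hc2
          rw [if_pos (hC1.mpr hc1), if_pos (hC2.mpr hc2')]
          have hlast'' : Fin.last n ∈ insert i (Δ.erase (i + 1)) :=
            Finset.mem_insert_of_mem (Finset.mem_erase.2 ⟨ne_of_gt hi1last, hlastΔ⟩)
          have hiΔ'' : i ∈ insert i (Δ.erase (i + 1)) := Finset.mem_insert_self _ _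
          have hi1Δ'' : i + 1 ∉ insert i (Δ.erase (i + 1)) := by
            rw [Finset.mem_insert]
            rintro (h | h)
            · exact (ne_of_gt hii) h
            · exact (Finset.mem_erase.1 h).1 rfl
          have hconj3 := tau_conj (Δ := insert i (Δ.erase (i + 1))) hiv hlast'' hiΔ'' hi1Δ''
          have hsets : (insert i (Δ.erase (i + 1))).erase i = Δ.erase (i + 1) :=
            Finset.erase_insert (fun h => hiΔ (Finset.mem_erase.1 h).2)
          have hsets2 : insert (i + 1) (Δ.erase (i + 1)) = Δ := Finset.insert_erase hi1Δ
          rw [hsets, hsets2] at hconj3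
          refine ⟨insert i (Δ.erase (i + 1)), hlast'', ?_, ?_⟩
          · intro x hx y hy hxy
            rw [hsinv]
            simp only [Equiv.Perm.mul_apply]
            rcases Finset.mem_insert.1 hx with hxi | hxE
            · rw [hxi] at hxy ⊢
              rcases Finset.mem_insert.1 hy with hyi | hyE
              · rw [hyi] at hxy
                exact absurd hxy (lt_irrefl _)
              · obtain ⟨hy1, hyΔ⟩ := Finset.mem_erase.1 hyE
                have hygt : i + 1 < y := lt_of_le_of_ne (hstep y hxy) (fun h => hy1 h.symm)
                rw [Equiv.swap_apply_of_ne_of_ne (ne_of_gt hxy) (ne_of_gt hygt),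
                  Equiv.swap_apply_left]
                exact hdec (i + 1) hi1Δ y hyΔ hygt
            · obtain ⟨hx1, hxΔ⟩ := Finset.mem_erase.1 hxE
              rcases Finset.mem_insert.1 hy with hyi | hyE
              · rw [hyi] at hxy ⊢
                rw [Equiv.swap_apply_left,
                  Equiv.swap_apply_of_ne_of_ne (ne_of_lt hxy) (ne_of_lt (hxy.trans hii))]
                exact hdec x hxΔ (i + 1) hi1Δ (hxy.trans hii)
              · obtain ⟨hy1, hyΔ⟩ := Finset.mem_erase.1 hyE
                rw [Equiv.swap_apply_of_ne_of_ne (fun h => hiΔ (by rw [← h]; exact hyΔ)) hy1,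
                  Equiv.swap_apply_of_ne_of_ne (fun h => hiΔ (by rw [← h]; exact hxΔ)) hx1]
                exact hdec x hxΔ y hyΔ hxy
          · rw [hu, ← hconj3]
            exact group_aux1 (Equiv.swap i (i + 1))
              (tauDelta n (insert i (Δ.erase (i + 1)))) w (sigma n)⁻¹ hss
        · by_cases hc1 : w⁻¹ i < w⁻¹ (i + 1)
          · -- D2
            rw [if_pos (hC1.mpr hc1), if_neg (fun h => by
              have h' := hC2.mp h
              rw [ht1] at h'
              exact hc2 h')]
            have hgapstep : ∀ z ∈ Δ, ¬(i < z ∧ z < i + 1) := by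
              rintro z hz ⟨h1, h2⟩
              exact absurd (hstep z h1) (not_le.2 h2)
            have hins : tauDelta n (insert i Δ) = tauDelta n Δ * Equiv.swap i (i + 1) :=
              tau_insert hneΔ hiΔ hi1Δ hii hgapstep
            have hd : w⁻¹ ((tauDelta n Δ)⁻¹ (i + 1)) < w⁻¹ i := by
              rcases lt_trichotomy (w⁻¹ ((tauDelta n Δ)⁻¹ (i + 1))) (w⁻¹ i) with h | h | h
              · exact h
              · exfalso
                have h' : (tauDelta n Δ)⁻¹ (i + 1) = i := (w⁻¹).injective h
                rw [h'] at hmΔ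
                exact hiΔ hmΔ
              · exact absurd h hc2
            refine ⟨insert i Δ, Finset.mem_insert_of_mem hlastΔ, ?_, ?_⟩
            · intro x hx y hy hxy
              rw [hsinv]
              simp only [Equiv.Perm.mul_apply]
              rcases Finset.mem_insert.1 hx with hxi | hxΔ
              · rw [hxi] at hxy ⊢
                rcases Finset.mem_insert.1 hy with hyi | hyΔ
                · rw [hyi] at hxy
                  exact absurd hxy (lt_irrefl _)
                · rw [Equiv.swap_apply_left]
                  by_cases hy1 : y = i + 1
                  · rw [hy1, Equiv.swap_apply_right]
                    exact hc1
                  · have hygt : i + 1 < y := lt_of_le_of_ne (hstep y hxy) (fun h => hy1 h.symm)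
                    rw [Equiv.swap_apply_of_ne_of_ne (ne_of_gt hxy) hy1]
                    have hym : (tauDelta n Δ)⁻¹ (i + 1) ≤ y := hmmin y hyΔ hygt
                    rcases eq_or_lt_of_le hym with h | h
                    · rw [← h]; exact hdm
                    · exact (hdec _ hmΔ y hyΔ h).trans hdm
              · rcases Finset.mem_insert.1 hy with hyi | hyΔ
                · rw [hyi] at hxy ⊢
                  rw [Equiv.swap_apply_left,
                    Equiv.swap_apply_of_ne_of_ne (ne_of_lt hxy) (ne_of_lt (hxy.trans hii))]
                  exact hdec x hxΔ (i + 1) hi1Δ (hxy.trans hii)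
                · by_cases hx1 : x = i + 1
                  · rw [hx1] at hxy
                    rw [hx1, Equiv.swap_apply_right]
                    have hy1 : y ≠ i + 1 := ne_of_gt hxy
                    rw [Equiv.swap_apply_of_ne_of_ne (ne_of_gt (hii.trans hxy)) hy1]
                    have hym : (tauDelta n Δ)⁻¹ (i + 1) ≤ y := hmmin y hyΔ hxy
                    rcases eq_or_lt_of_le hym with h | h
                    · rw [← h]; exact hd
                    · exact (hdec _ hmΔ y hyΔ h).trans hd
                  · by_cases hy1 : y = i + 1
                    · rw [hy1] at hxy
                      rw [hy1, Equiv.swap_apply_right]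
                      have hxi : x ≠ i := fun h => hiΔ (by rw [← h]; exact hxΔ)
                      rw [Equiv.swap_apply_of_ne_of_ne hxi hx1]
                      exact hc1.trans (hdec x hxΔ (i + 1) hi1Δ hxy)
                    · rw [Equiv.swap_apply_of_ne_of_ne (fun h => hiΔ (by rw [← h]; exact hyΔ)) hy1,
                        Equiv.swap_apply_of_ne_of_ne (fun h => hiΔ (by rw [← h]; exact hxΔ)) hx1]
                      exact hdec x hxΔ y hyΔ hxy
            · rw [hu, hins]
              exact (group_aux4 (tauDelta n Δ) (Equiv.swap i (i + 1)) w (sigma n)⁻¹ hss).symm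
          · -- D3
            rw [if_neg (fun h => hc1 (hC1.mp h)), if_neg (fun h => by
              have h' := hC2.mp h
              rw [ht1] at h'
              exact hc2 h')]
            exact ⟨Δ, hlastΔ, hdec, hu⟩
      · -- case A
        have ht1 : (tauDelta n Δ)⁻¹ i = i := by
          rw [Equiv.Perm.inv_eq_iff_eq]
          exact (tau_apply_of_not_mem hiΔ).symm
        have ht2 : (tauDelta n Δ)⁻¹ (i + 1) = i + 1 := by
          rw [Equiv.Perm.inv_eq_iff_eq]
          exact (tau_apply_of_not_mem hi1Δ).symm
        by_cases hc : w⁻¹ i < w⁻¹ (i + 1)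
        · rw [if_pos (hC1.mpr hc), if_pos (hC2.mpr (by rw [ht1, ht2]; exact hc))]
          refine ⟨Δ, hlastΔ, ?_, ?_⟩
          · intro x hx y hy hxy
            rw [hsinv]
            simp only [Equiv.Perm.mul_apply]
            rw [Equiv.swap_apply_of_ne_of_ne (fun h => hiΔ (by rw [← h]; exact hy))
                (fun h => hi1Δ (by rw [← h]; exact hy)),
              Equiv.swap_apply_of_ne_of_ne (fun h => hiΔ (by rw [← h]; exact hx))
                (fun h => hi1Δ (by rw [← h]; exact hx))]
            exact hdec x hx y hy hxy
          · rw [hu]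
            have hcomm := tau_swap_comm (n := n) hiΔ hi1Δ
            calc Equiv.swap i (i + 1) * (tauDelta n Δ * w * (sigma n)⁻¹)
                = (Equiv.swap i (i + 1) * tauDelta n Δ) * w * (sigma n)⁻¹ := by group
              _ = (tauDelta n Δ * Equiv.swap i (i + 1)) * w * (sigma n)⁻¹ := by rw [hcomm]
              _ = tauDelta n Δ * (Equiv.swap i (i + 1) * w) * (sigma n)⁻¹ := by group
        · rw [if_neg (fun h => hc (hC1.mp h)), if_neg (fun h => by
            have h' := hC2.mp h
            rw [ht1, ht2] at h'
            exact hc h')]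
          exact ⟨Δ, hlastΔ, hdec, hu⟩


end ShareshianPairs
end
end
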